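/- arXiv:2312.15623 — 5 statements merged into one kernel-verified Lean document; each statement's English description precedes it below -/
import Mathlib

section
/- Let X and N be independent real random variables, each admitting a probability density and having finite differential entropy, and suppose X + N also has finite differential entropy. Then the mutual information of the input and output of the additive-noise channel satisfies I(X ; X + N) = h(X + N) − h(N). -/
open MeasureTheory ProbabilityTheory Real
open scoped NNReal ENNReal Classical

noncomputable section

/-- Kullback–Leibler divergence `D(P ‖ Q) = ∫ log (dP/dQ) dP` when `P ≪ Q` and the
integral is well defined; `∞` otherwise. -/
def klDiv {α : Type*} [MeasurableSpace α] (P Q : Measure α) : EReal :=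
  if P ≪ Q ∧ Integrable (fun x => Real.log (P.rnDeriv Q x).toReal) P
  then ((∫ x, Real.log (P.rnDeriv Q x).toReal ∂P : ℝ) : EReal)
  else ⊤

/-- Mutual information `I(X ; Y) = D(P_(X,Y) ‖ P_X ⊗ P_Y)`. -/
def mutualInfo {Ω : Type*} [MeasurableSpace Ω] (μ : Measure Ω) (X Y : Ω → ℝ) : EReal :=
  klDiv (μ.map (fun ω => (X ω, Y ω))) ((μ.map X).prod (μ.map Y))

/-- Differential entropy `h(P) = -∫ f log f` where `f = dP/dx`. -/
def diffEntropy (P : Measure ℝ) : ℝ :=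
  -∫ x, (P.rnDeriv volume x).toReal * Real.log (P.rnDeriv volume x).toReal

/-- `P` has a density and a well-defined, finite differential entropy. -/
def HasFiniteDiffEntropy (P : Measure ℝ) : Prop :=
  P ≪ volume ∧
    Integrable (fun x => (P.rnDeriv volume x).toReal * Real.log (P.rnDeriv volume x).toReal)

/-- The mutual information `I(X ; X + N)` of the additive-noise channel with input law `P`
and noise law `Q`, input and noise being independent (canonical product-space model). -/
def rate (P Q : Measure ℝ) : EReal :=
  mutualInfo (P.prod Q) (fun p => p.1) (fun p => p.1 + p.2)

namespace AddNoiseAux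

abbrev vol2 : Measure (ℝ × ℝ) := (volume : Measure ℝ).prod volume

def shear : (ℝ × ℝ) ≃ᵐ (ℝ × ℝ) :=
{ toEquiv :=
  { toFun := fun p => (p.1, p.1 + p.2),
    invFun := fun p => (p.1, p.2 - p.1),
    left_inv := fun p => by simp,
    right_inv := fun p => by simp },
  measurable_toFun := measurable_fst.prodMk (measurable_fst.add measurable_snd),
  measurable_invFun := measurable_fst.prodMk (measurable_snd.sub measurable_fst) }

lemma shear_apply (p : ℝ × ℝ) : shear p = (p.1, p.1 + p.2) := rfl
lemma shear_symm_apply (p : ℝ × ℝ) : shear.symm p = (p.1, p.2 - p.1) := rfl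

lemma shear_mp : MeasurePreserving shear vol2 vol2 :=
  MeasurePreserving.skew_product (g := fun (a c : ℝ) => a + c)
    (MeasurePreserving.id (volume : Measure ℝ))
    (measurable_fst.add measurable_snd)
    (Filter.Eventually.of_forall fun a => map_add_left_eq_self volume a)

lemma shear_symm_mp : MeasurePreserving shear.symm vol2 vol2 :=
  shear_mp.symm shear

lemma map_shear_withDensity {h : ℝ × ℝ → ℝ≥0∞} :
    (vol2.withDensity h).map shear = vol2.withDensity (fun p => h (shear.symm p)) := by
  ext s hs
  rw [MeasurableEquiv.map_apply, withDensity_apply _ (shear.measurable hs),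
    withDensity_apply _ hs,
    ← shear_mp.setLIntegral_comp_preimage_emb shear.measurableEmbedding
      (fun p => h (shear.symm p)) s]
  refine setLIntegral_congr_fun (shear.measurable hs) (fun p _ => ?_)
  simp

lemma prod_withDensity (P Q : Measure ℝ) [IsFiniteMeasure P] [IsFiniteMeasure Q]
    (hP : P ≪ volume) (hQ : Q ≪ volume) :
    P.prod Q = vol2.withDensity (fun p => P.rnDeriv volume p.1 * Q.rnDeriv volume p.2) := by
  refine Measure.prod_eq fun s t hs ht => ?_
  rw [withDensity_apply _ (hs.prod ht), ← Measure.prod_restrict,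
    lintegral_prod_mul ((P.measurable_rnDeriv volume).aemeasurable)
      ((Q.measurable_rnDeriv volume).aemeasurable),
    Measure.setLIntegral_rnDeriv hP, Measure.setLIntegral_rnDeriv hQ]

end AddNoiseAux

open AddNoiseAux

/-- For independent `X`, `N` with densities and finite differential entropies,
with `X + N` of finite differential entropy, `I(X ; X + N) = h(X + N) - h(N)`. -/
theorem stmt_1 {Ω : Type*} [MeasurableSpace Ω] (μ : Measure Ω) [IsProbabilityMeasure μ]
    (X N : Ω → ℝ) (hX : Measurable X) (hN : Measurable N)
    (hindep : IndepFun X N μ)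
    (hXent : HasFiniteDiffEntropy (μ.map X))
    (hNent : HasFiniteDiffEntropy (μ.map N))
    (hSent : HasFiniteDiffEntropy (μ.map (fun ω => X ω + N ω))) :
    mutualInfo μ X (fun ω => X ω + N ω)
      = ((diffEntropy (μ.map (fun ω => X ω + N ω)) - diffEntropy (μ.map N) : ℝ) : EReal) := by
  classical
  obtain ⟨hPac, hPint⟩ := hXent
  obtain ⟨hQac, hQint⟩ := hNent
  obtain ⟨hSac, hSint⟩ := hSent
  set P : Measure ℝ := μ.map X with hPdef
  set Q : Measure ℝ := μ.map N with hQdef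
  set S : Measure ℝ := μ.map (fun ω => X ω + N ω) with hSdef
  haveI : IsProbabilityMeasure P := Measure.isProbabilityMeasure_map hX.aemeasurable
  haveI : IsProbabilityMeasure Q := Measure.isProbabilityMeasure_map hN.aemeasurable
  haveI : IsProbabilityMeasure S := Measure.isProbabilityMeasure_map (hX.add hN).aemeasurable
  set f : ℝ → ℝ≥0∞ := P.rnDeriv volume with hfdef
  set g : ℝ → ℝ≥0∞ := Q.rnDeriv volume with hgdef
  set s : ℝ → ℝ≥0∞ := S.rnDeriv volume with hsdef
  have hf : Measurable f := Measure.measurable_rnDeriv _ _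
  have hg : Measurable g := Measure.measurable_rnDeriv _ _
  have hs : Measurable s := Measure.measurable_rnDeriv _ _
  set J : Measure (ℝ × ℝ) := μ.map (fun ω => (X ω, X ω + N ω)) with hJdef
  -- joint law via independence
  have hmapXN : μ.map (fun ω => (X ω, N ω)) = P.prod Q :=
    (indepFun_iff_map_prod_eq_prod_map_map hX.aemeasurable hN.aemeasurable).mp hindep
  have hJmap : J = (P.prod Q).map shear := by
    rw [← hmapXN, Measure.map_map shear.measurable (hX.prodMk hN)]
    rfl
  set k : ℝ × ℝ → ℝ≥0∞ := fun p => f p.1 * g (p.2 - p.1) with hkdef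
  have hk : Measurable k :=
    (hf.comp measurable_fst).mul (hg.comp (measurable_snd.sub measurable_fst))
  have hJ : J = vol2.withDensity k := by
    rw [hJmap, prod_withDensity P Q hPac hQac, map_shear_withDensity]
    rfl
  -- convolution density of S
  set c : ℝ → ℝ≥0∞ := fun y => ∫⁻ x, f x * g (y - x) with hcdef
  have hc : Measurable c :=
    Measurable.lintegral_prod_right'
      (f := fun q : ℝ × ℝ => f q.2 * g (q.1 - q.2))
      ((hf.comp measurable_snd).mul (hg.comp (measurable_fst.sub measurable_snd)))
  have hSmap : S = J.map Prod.snd := by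
    rw [hJdef, Measure.map_map measurable_snd (hX.prodMk (show Measurable fun ω => X ω + N ω from hX.add hN))]
    rfl
  have hSc : S = volume.withDensity c := by
    rw [hSmap, hJ]
    ext B hB
    rw [Measure.map_apply measurable_snd hB, withDensity_apply _ (measurable_snd hB),
      withDensity_apply _ hB]
    have hpre : (Prod.snd ⁻¹' B : Set (ℝ × ℝ)) = Set.univ ×ˢ B := by ext p; simp
    rw [hpre, ← Measure.prod_restrict, lintegral_prod_symm _ hk.aemeasurable,
      Measure.restrict_univ]
  have hsc : s =ᵐ[volume] c := by
    have h := Measure.rnDeriv_withDensity (volume : Measure ℝ) hc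
    rw [← hSc] at h
    exact h
  -- rho and the a.e. identity
  set ρ : ℝ × ℝ → ℝ≥0∞ := fun p => g (p.2 - p.1) / s p.2 with hρdef
  have hρ : Measurable ρ :=
    (hg.comp (measurable_snd.sub measurable_fst)).div (hs.comp measurable_snd)
  set fs : ℝ × ℝ → ℝ≥0∞ := fun p => f p.1 * s p.2 with hfsdef
  have hfs : Measurable fs := (hf.comp measurable_fst).mul (hs.comp measurable_snd)
  have hs_fin : ∀ᵐ y ∂(volume : Measure ℝ), s y ≠ ∞ := by
    filter_upwards [Measure.rnDeriv_lt_top S volume] with y hy using hy.ne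
  have hg_fin : ∀ᵐ y ∂(volume : Measure ℝ), g y ≠ ∞ := by
    filter_upwards [Measure.rnDeriv_lt_top Q volume] with y hy using hy.ne
  -- a.e. on the product: where s p.2 = 0, k p = 0
  have hzero : ∀ᵐ p ∂vol2, s p.2 = 0 → k p = 0 := by
    have hmble : MeasurableSet {z : ℝ × ℝ | s z.2 = 0 → k z = 0} := by
      have : {z : ℝ × ℝ | s z.2 = 0 → k z = 0}
          = {z : ℝ × ℝ | s z.2 = 0}ᶜ ∪ {z : ℝ × ℝ | k z = 0} := by
        ext z; by_cases h : s z.2 = 0 <;> simp [h]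
      rw [this]
      exact (((hs.comp measurable_snd) (measurableSet_singleton 0)).compl).union
        (hk (measurableSet_singleton 0))
    rw [Measure.ae_prod_iff_ae_ae hmble,
      Measure.ae_ae_comm (p := fun x y => s y = 0 → k (x, y) = 0) hmble]
    filter_upwards [hsc] with y hy
    by_cases h0 : s y = 0
    · have hcy : c y = 0 := by rw [← hy, h0]
      have : ∀ᵐ x ∂(volume : Measure ℝ), f x * g (y - x) = 0 := by
        have := (lintegral_eq_zero_iff (hf.mul (hg.comp (measurable_const.sub measurable_id)))).mp hcy
        filter_upwards [this] with x hx using hx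
      filter_upwards [this] with x hx
      intro _
      simpa [hkdef] using hx
    · exact Filter.Eventually.of_forall fun x h => absurd h h0
  have hstop : ∀ᵐ p ∂vol2, s p.2 ≠ ∞ := by
    rw [ae_iff]
    have hset : {p : ℝ × ℝ | ¬ s p.2 ≠ ∞} = Set.univ ×ˢ {y : ℝ | s y = ∞} := by
      ext p; simp
    rw [hset, Measure.prod_prod]
    have : (volume : Measure ℝ) {y : ℝ | s y = ∞} = 0 := by
      have := hs_fin
      rw [ae_iff] at this
      simpa using this
    rw [this, mul_zero]
  have hae : (fun p => fs p * ρ p) =ᵐ[vol2] k := by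
    filter_upwards [hzero, hstop] with p h0 htop
    by_cases hsp : s p.2 = 0
    · simp [hfsdef, hsp, h0 hsp]
    · have : s p.2 * (g (p.2 - p.1) / s p.2) = g (p.2 - p.1) :=
        ENNReal.mul_div_cancel hsp htop
      simp only [hfsdef, hρdef, hkdef]
      rw [mul_assoc, this]
  -- J as withDensity over P.prod S
  have hPS : P.prod S = vol2.withDensity fs := prod_withDensity P S hPac hSac
  have hJPS : J = (P.prod S).withDensity ρ := by
    rw [hPS, ← withDensity_mul _ hfs hρ, hJ, ← withDensity_congr_ae hae]
    rfl
  have hJac : J ≪ P.prod S := by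
    rw [hJPS]; exact withDensity_absolutelyContinuous _ _
  have hJvol : J ≪ vol2 := by
    rw [hJ]; exact withDensity_absolutelyContinuous _ _
  have hrn : J.rnDeriv (P.prod S) =ᵐ[P.prod S] ρ := by
    rw [hJPS]
    exact Measure.rnDeriv_withDensity (P.prod S) hρ
  have hrnJ : J.rnDeriv (P.prod S) =ᵐ[J] ρ := hJac.ae_eq hrn
  -- J-a.e. facts
  have hJ_g0 : ∀ᵐ p ∂J, g (p.2 - p.1) ≠ 0 := by
    rw [ae_iff]
    simp only [ne_eq, not_not]
    have hE : MeasurableSet {p : ℝ × ℝ | g (p.2 - p.1) = 0} :=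
      (hg.comp (measurable_snd.sub measurable_fst)) (measurableSet_singleton 0)
    rw [hJ, withDensity_apply _ hE]
    calc ∫⁻ p in {p : ℝ × ℝ | g (p.2 - p.1) = 0}, k p ∂vol2
        = ∫⁻ _ in {p : ℝ × ℝ | g (p.2 - p.1) = 0}, 0 ∂vol2 := by
          refine setLIntegral_congr_fun hE (fun p hp => ?_)
          have hp' : g (p.2 - p.1) = 0 := hp
          simp [hkdef, hp']
      _ = 0 := by simp
  have hJ_gtop : ∀ᵐ p ∂J, g (p.2 - p.1) ≠ ∞ := by
    have hv : ∀ᵐ p ∂vol2, g (p.2 - p.1) ≠ ∞ := by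
      rw [ae_iff]
      simp only [ne_eq, not_not]
      have hset : {p : ℝ × ℝ | g (p.2 - p.1) = ∞}
          = shear.symm ⁻¹' (Set.univ ×ˢ {y : ℝ | g y = ∞}) := by
        ext p; simp [shear_symm_apply]
      rw [hset, shear_symm_mp.measure_preimage_equiv, Measure.prod_prod]
      have h0 : (volume : Measure ℝ) {y : ℝ | g y = ∞} = 0 := by
        have h := hg_fin; rw [ae_iff] at h; simpa using h
      rw [h0, mul_zero]
    exact hJvol.ae_le hv
  have hJ_s0 : ∀ᵐ p ∂J, s p.2 ≠ 0 := by
    have hv : ∀ᵐ p ∂(P.prod S), s p.2 ≠ 0 := by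
      rw [ae_iff]
      simp only [ne_eq, not_not]
      have hset : {p : ℝ × ℝ | s p.2 = 0} = Set.univ ×ˢ {y : ℝ | s y = 0} := by
        ext p; simp
      rw [hset, Measure.prod_prod]
      have hS0 : S {y : ℝ | s y = 0} = 0 := by
        have hrw : S = volume.withDensity s := (Measure.withDensity_rnDeriv_eq S volume hSac).symm
        have hE0 : MeasurableSet {y : ℝ | s y = 0} := hs (measurableSet_singleton 0)
        conv_lhs => rw [hrw]
        rw [withDensity_apply _ hE0]
        calc ∫⁻ y in {y : ℝ | s y = 0}, s y ∂volume
            = ∫⁻ _ in {y : ℝ | s y = 0}, 0 ∂volume :=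
              setLIntegral_congr_fun (hs (measurableSet_singleton 0))
                (fun y hy => hy)
          _ = 0 := by simp
      rw [hS0, mul_zero]
    exact hJac.ae_le hv
  have hJ_stop : ∀ᵐ p ∂J, s p.2 ≠ ∞ := hJvol.ae_le hstop
  -- the log identity
  set A : ℝ × ℝ → ℝ := fun p => Real.log (g (p.2 - p.1)).toReal with hAdef
  set B : ℝ × ℝ → ℝ := fun p => Real.log (s p.2).toReal with hBdef
  have hlog : (fun p => Real.log ((J.rnDeriv (P.prod S)) p).toReal) =ᵐ[J]
      (fun p => A p - B p) := by
    filter_upwards [hrnJ, hJ_g0, hJ_gtop, hJ_s0, hJ_stop] with p h1 h2 h3 h4 h5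
    rw [h1]
    simp only [hρdef, hAdef, hBdef]
    rw [ENNReal.toReal_div,
      Real.log_div (ENNReal.toReal_ne_zero.mpr ⟨h2, h3⟩) (ENNReal.toReal_ne_zero.mpr ⟨h4, h5⟩)]
  -- measurability of A, B and the 1d log functions
  have hA : Measurable A :=
    Real.measurable_log.comp (ENNReal.measurable_toReal.comp
      (hg.comp (measurable_snd.sub measurable_fst)))
  have hB : Measurable B :=
    Real.measurable_log.comp (ENNReal.measurable_toReal.comp (hs.comp measurable_snd))
  have hQfunm : Measurable (fun y => Real.log (g y).toReal) :=
    Real.measurable_log.comp (ENNReal.measurable_toReal.comp hg)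
  have hsfunm : Measurable (fun y => Real.log (s y).toReal) :=
    Real.measurable_log.comp (ENNReal.measurable_toReal.comp hs)
  -- integrability and values of the 1d integrals
  have hQig : Integrable (fun y => Real.log (g y).toReal) Q := by
    rw [← integrable_rnDeriv_smul_iff hQac]
    simpa [smul_eq_mul] using hQint
  have hQval : ∫ y, Real.log (g y).toReal ∂Q = - diffEntropy Q := by
    rw [← integral_rnDeriv_smul hQac]
    simp only [diffEntropy, smul_eq_mul, neg_neg]
    rfl
  have hSig : Integrable (fun y => Real.log (s y).toReal) S := by
    rw [← integrable_rnDeriv_smul_iff hSac]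
    simpa [smul_eq_mul] using hSint
  have hSval : ∫ y, Real.log (s y).toReal ∂S = - diffEntropy S := by
    rw [← integral_rnDeriv_smul hSac]
    simp only [diffEntropy, smul_eq_mul, neg_neg]
    rfl
  -- transfer along the maps
  have hmapsndPQ : (P.prod Q).map Prod.snd = Q := by
    rw [Measure.map_snd_prod, measure_univ, one_smul]
  have hPQsnd : Integrable (fun q : ℝ × ℝ => Real.log (g q.2).toReal) (P.prod Q) := by
    have h1 : Integrable (fun y => Real.log (g y).toReal) ((P.prod Q).map Prod.snd) := by
      rw [hmapsndPQ]; exact hQig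
    have h2 := (integrable_map_measure hQfunm.aestronglyMeasurable
      measurable_snd.aemeasurable).mp h1
    simpa [Function.comp_def] using h2
  have hAint : Integrable A J := by
    rw [hJmap, integrable_map_measure hA.aestronglyMeasurable shear.measurable.aemeasurable]
    have heq : (A ∘ shear) = fun q : ℝ × ℝ => Real.log (g q.2).toReal := by
      funext q; simp [hAdef, Function.comp, shear_apply]
    rw [heq]; exact hPQsnd
  have hAval : ∫ p, A p ∂J = - diffEntropy Q := by
    rw [hJmap, integral_map shear.measurable.aemeasurable hA.aestronglyMeasurable]
    have heq : ∀ q : ℝ × ℝ, A (shear q) = Real.log (g q.2).toReal := by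
      intro q; simp [hAdef, shear_apply]
    rw [integral_congr_ae (Filter.Eventually.of_forall heq)]
    have h1 : ∫ q : ℝ × ℝ, Real.log (g q.2).toReal ∂(P.prod Q)
        = ∫ y, Real.log (g y).toReal ∂((P.prod Q).map Prod.snd) := by
      rw [integral_map measurable_snd.aemeasurable hQfunm.aestronglyMeasurable]
    rw [h1, hmapsndPQ, hQval]
  have hBint : Integrable B J := by
    have h1 : Integrable (fun y => Real.log (s y).toReal) (J.map Prod.snd) := by
      rw [← hSmap]; exact hSig
    have h2 := (integrable_map_measure hsfunm.aestronglyMeasurable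
      measurable_snd.aemeasurable).mp h1
    simpa [Function.comp_def, hBdef] using h2
  have hBval : ∫ p, B p ∂J = - diffEntropy S := by
    have h1 : ∫ p, B p ∂J = ∫ y, Real.log (s y).toReal ∂(J.map Prod.snd) := by
      rw [integral_map measurable_snd.aemeasurable hsfunm.aestronglyMeasurable]
    rw [h1, ← hSmap, hSval]
  -- final assembly
  have hint : Integrable (fun p => Real.log ((J.rnDeriv (P.prod S)) p).toReal) J :=
    (hAint.sub hBint).congr hlog.symm
  have hval : ∫ p, Real.log ((J.rnDeriv (P.prod S)) p).toReal ∂J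
      = diffEntropy S - diffEntropy Q := by
    rw [integral_congr_ae hlog, integral_sub hAint hBint, hAval, hBval]
    ring
  unfold mutualInfo klDiv
  rw [if_pos ⟨hJac, hint⟩]
  exact congrArg _ hval
end
end

section
/- Let N and N' be real random variables with laws P_N and P_{N'}, and let Z be a real random variable independent of each of N and N'. Then the Kullback–Leibler divergence cannot increase under the addition of the independent noise Z: D(P_{N+Z} ‖ P_{N'+Z}) ≤ D(P_N ‖ P_{N'}). -/
open MeasureTheory ProbabilityTheory Real
open scoped NNReal ENNReal Classical

noncomputable section

/-- Data-processing inequality core lemma for pushforwards. -/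
lemma dpi_map {α β : Type*} [MeasurableSpace α] [MeasurableSpace β]
    (μ ν : Measure α) [IsProbabilityMeasure μ] [IsProbabilityMeasure ν]
    {T : α → β} (hT : Measurable T) (hμν : μ ≪ ν)
    (hint : Integrable (fun x => Real.log (μ.rnDeriv ν x).toReal) μ) :
    Integrable (fun y => Real.log ((μ.map T).rnDeriv (ν.map T) y).toReal) (μ.map T) ∧
    ∫ y, Real.log ((μ.map T).rnDeriv (ν.map T) y).toReal ∂(μ.map T)
      ≤ ∫ x, Real.log (μ.rnDeriv ν x).toReal ∂μ := by
  haveI : IsProbabilityMeasure (μ.map T) := Measure.isProbabilityMeasure_map hT.aemeasurable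
  haveI : IsProbabilityMeasure (ν.map T) := Measure.isProbabilityMeasure_map hT.aemeasurable
  set f := μ.rnDeriv ν with hf_def
  set g := (μ.map T).rnDeriv (ν.map T) with hg_def
  have hf_meas : Measurable f := Measure.measurable_rnDeriv _ _
  have hg_meas : Measurable g := Measure.measurable_rnDeriv _ _
  have hTμν : μ.map T ≪ ν.map T := hμν.map hT
  have hfpos : ∀ᵐ x ∂μ, 0 < f x := Measure.rnDeriv_pos hμν
  have hffin : ∀ᵐ x ∂μ, f x < ⊤ := hμν.ae_le (Measure.rnDeriv_lt_top μ ν)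
  have hgpos : ∀ᵐ y ∂(μ.map T), 0 < g y := Measure.rnDeriv_pos hTμν
  have hgfin : ∀ᵐ y ∂(μ.map T), g y < ⊤ := hTμν.ae_le (Measure.rnDeriv_lt_top _ _)
  have hgT : ∀ᵐ x ∂μ, 0 < g (T x) ∧ g (T x) < ⊤ := by
    exact (ae_map_iff hT.aemeasurable
      ((measurableSet_lt measurable_const hg_meas).inter
        (measurableSet_lt hg_meas measurable_const))).mp (hgpos.and hgfin)
  -- the ratio
  set r : α → ℝ := fun x => (g (T x)).toReal / (f x).toReal with hr_def
  have hr_meas : Measurable r := ((hg_meas.comp hT).ennreal_toReal).div hf_meas.ennreal_toReal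
  have hr_nonneg : ∀ x, 0 ≤ r x := fun x => div_nonneg ENNReal.toReal_nonneg ENNReal.toReal_nonneg
  have hwd : ν.withDensity f = μ := Measure.withDensity_rnDeriv_eq μ ν hμν
  -- lintegral bound for r
  have hlin : ∫⁻ x, ENNReal.ofReal (r x) ∂μ ≤ 1 := by
    calc ∫⁻ x, ENNReal.ofReal (r x) ∂μ
        = ∫⁻ x, ENNReal.ofReal (r x) ∂(ν.withDensity f) := by rw [hwd]
      _ = ∫⁻ x, (f * fun x => ENNReal.ofReal (r x)) x ∂ν :=
          lintegral_withDensity_eq_lintegral_mul ν hf_meas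
            (ENNReal.measurable_ofReal.comp hr_meas)
      _ ≤ ∫⁻ x, g (T x) ∂ν := by
          refine lintegral_mono_ae ?_
          filter_upwards [Measure.rnDeriv_lt_top μ ν] with x hx
          simp only [Pi.mul_apply]
          rcases eq_or_ne (f x) 0 with h0 | h0
          · simp [h0]
          · have hpos : 0 < (f x).toReal := ENNReal.toReal_pos h0 hx.ne
            have hfx : f x = ENNReal.ofReal (f x).toReal := (ENNReal.ofReal_toReal hx.ne).symm
            have hofr : ENNReal.ofReal (r x)
                = ENNReal.ofReal (g (T x)).toReal / ENNReal.ofReal (f x).toReal := by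
              simp only [hr_def]
              exact ENNReal.ofReal_div_of_pos hpos
            calc f x * ENNReal.ofReal (r x)
                = ENNReal.ofReal (f x).toReal *
                    (ENNReal.ofReal (g (T x)).toReal / ENNReal.ofReal (f x).toReal) := by
                  rw [hofr, ← hfx]
              _ = ENNReal.ofReal (g (T x)).toReal :=
                  ENNReal.mul_div_cancel (ENNReal.ofReal_pos.mpr hpos).ne' ENNReal.ofReal_ne_top
              _ ≤ g (T x) := ENNReal.ofReal_toReal_le
      _ = ∫⁻ y, g y ∂(ν.map T) := (lintegral_map hg_meas hT).symm
      _ ≤ (μ.map T) Set.univ := Measure.lintegral_rnDeriv_le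
      _ = 1 := measure_univ
  have hr_int : Integrable r μ := by
    refine ⟨hr_meas.aestronglyMeasurable, ?_⟩
    rw [hasFiniteIntegral_iff_ofReal (Filter.Eventually.of_forall hr_nonneg)]
    exact lt_of_le_of_lt hlin ENNReal.one_lt_top
  have hr_le : ∫ x, r x ∂μ ≤ 1 := by
    rw [integral_eq_lintegral_of_nonneg_ae (Filter.Eventually.of_forall hr_nonneg)
      hr_meas.aestronglyMeasurable]
    calc (∫⁻ x, ENNReal.ofReal (r x) ∂μ).toReal ≤ (1 : ℝ≥0∞).toReal :=
          ENNReal.toReal_mono ENNReal.one_ne_top hlin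
      _ = 1 := by simp
  -- a.e. identities
  have hlog : ∀ᵐ x ∂μ, Real.log ((g (T x)).toReal)
      = Real.log ((f x).toReal) + Real.log (r x) ∧ Real.log (r x) ≤ r x - 1 := by
    filter_upwards [hfpos, hffin, hgT] with x h1 h2 h3
    have ha : 0 < (f x).toReal := ENNReal.toReal_pos h1.ne' h2.ne
    have hb : 0 < (g (T x)).toReal := ENNReal.toReal_pos h3.1.ne' h3.2.ne
    have hrpos : 0 < r x := div_pos hb ha
    refine ⟨?_, Real.log_le_sub_one_of_pos hrpos⟩
    have : Real.log (r x) = Real.log (g (T x)).toReal - Real.log (f x).toReal := by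
      simp only [hr_def]
      exact Real.log_div hb.ne' ha.ne'
    rw [this]; ring
  -- negative part integrable on the image side
  have hn_int : Integrable (fun y => max (-(Real.log (g y).toReal)) 0) (μ.map T) := by
    have hn_meas : Measurable fun y => max (-(Real.log (g y).toReal)) 0 :=
      ((Real.measurable_log.comp hg_meas.ennreal_toReal).neg).max measurable_const
    refine ⟨hn_meas.aestronglyMeasurable, ?_⟩
    have hnn : 0 ≤ᵐ[Measure.map T μ] (fun y => max (-(Real.log (g y).toReal)) 0) :=
      Filter.Eventually.of_forall fun y => le_max_right _ _
    rw [hasFiniteIntegral_iff_ofReal hnn]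
    have hwdT : (ν.map T).withDensity g = μ.map T :=
      Measure.withDensity_rnDeriv_eq _ _ hTμν
    calc ∫⁻ y, ENNReal.ofReal (max (-(Real.log (g y).toReal)) 0) ∂(μ.map T)
        = ∫⁻ y, ENNReal.ofReal (max (-(Real.log (g y).toReal)) 0)
            ∂((ν.map T).withDensity g) := by rw [hwdT]
      _ = ∫⁻ y, (g * fun y => ENNReal.ofReal (max (-(Real.log (g y).toReal)) 0)) y ∂(ν.map T) :=
          lintegral_withDensity_eq_lintegral_mul _ hg_meas
            (ENNReal.measurable_ofReal.comp hn_meas)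
      _ ≤ ∫⁻ _, 1 ∂(ν.map T) := by
          refine lintegral_mono_ae ?_
          filter_upwards [Measure.rnDeriv_lt_top (μ.map T) (ν.map T)] with y hy
          simp only [Pi.mul_apply]
          have hgy : g y = ENNReal.ofReal (g y).toReal := (ENNReal.ofReal_toReal hy.ne).symm
          rcases eq_or_lt_of_le (ENNReal.toReal_nonneg : (0:ℝ) ≤ (g y).toReal) with h0 | h0
          · have hg0 : g y = 0 := by
              rw [hgy, ← h0, ENNReal.ofReal_zero]
            simp [hg0]
          · have hmax : max (-(Real.log (g y).toReal)) 0 ≤ ((g y).toReal)⁻¹ := by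
              refine max_le ?_ (by positivity)
              rw [← Real.log_inv]
              exact (Real.log_le_sub_one_of_pos (by positivity)).trans
                (by linarith [inv_pos.mpr h0])
            calc g y * ENNReal.ofReal (max (-(Real.log (g y).toReal)) 0)
                ≤ g y * ENNReal.ofReal ((g y).toReal)⁻¹ :=
                  mul_le_mul_right (ENNReal.ofReal_le_ofReal hmax) _
              _ = ENNReal.ofReal (g y).toReal * ENNReal.ofReal ((g y).toReal)⁻¹ := by
                  nth_rewrite 1 [hgy]; rfl
              _ = ENNReal.ofReal ((g y).toReal * ((g y).toReal)⁻¹) :=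
                  (ENNReal.ofReal_mul h0.le).symm
              _ = 1 := by rw [mul_inv_cancel₀ h0.ne']; simp
      _ = 1 := by simp
    exact ENNReal.one_lt_top
  have hm_int : Integrable (fun y => min (Real.log (g y).toReal) 0) (μ.map T) := by
    have : (fun y => min (Real.log (g y).toReal) 0)
        = fun y => -(max (-(Real.log (g y).toReal)) 0) := by
      funext y
      rw [← min_neg_neg, neg_neg, neg_zero]
    rw [this]
    exact hn_int.neg
  have hgsm : AEStronglyMeasurable (fun y => Real.log (g y).toReal) (μ.map T) :=
    (Real.measurable_log.comp hg_meas.ennreal_toReal).aestronglyMeasurable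
  have hmT : Integrable (fun x => min (Real.log (g (T x)).toReal) 0) μ :=
    (integrable_map_measure (hm_int.aestronglyMeasurable) hT.aemeasurable).mp hm_int
  -- positive part integrable
  have hp_int : Integrable (fun x => max (Real.log (g (T x)).toReal) 0) μ := by
    refine Integrable.mono' (hint.abs.add hr_int)
      (((Real.measurable_log.comp ((hg_meas.comp hT).ennreal_toReal)).max
        measurable_const).aestronglyMeasurable) ?_
    filter_upwards [hlog] with x hx
    have h1 : Real.log ((g (T x)).toReal) ≤ |Real.log (f x).toReal| + r x := by
      rw [hx.1]
      have : Real.log (r x) ≤ r x := hx.2.trans (by linarith [hr_nonneg x])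
      exact add_le_add (le_abs_self _) this
    rw [Real.norm_eq_abs, abs_of_nonneg (le_max_right _ _)]
    exact max_le h1 (add_nonneg (abs_nonneg _) (hr_nonneg x))
  -- full integrability
  have hL_int : Integrable (fun x => Real.log (g (T x)).toReal) μ := by
    refine (hp_int.add hmT).congr (Filter.Eventually.of_forall fun x => ?_)
    simp [max_add_min]
  have hI : Integrable (fun y => Real.log (g y).toReal) (μ.map T) :=
    (integrable_map_measure hgsm hT.aemeasurable).mpr hL_int
  refine ⟨hI, ?_⟩
  have hlr_int : Integrable (fun x => Real.log (r x)) μ := by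
    refine (hL_int.sub hint).congr ?_
    filter_upwards [hlog] with x hx
    simp only [Pi.sub_apply]
    rw [hx.1]; ring
  calc ∫ y, Real.log (g y).toReal ∂(μ.map T)
      = ∫ x, Real.log (g (T x)).toReal ∂μ := integral_map hT.aemeasurable hgsm
    _ = ∫ x, (Real.log (f x).toReal + Real.log (r x)) ∂μ := by
        refine integral_congr_ae ?_
        filter_upwards [hlog] with x hx using hx.1
    _ = ∫ x, Real.log (f x).toReal ∂μ + ∫ x, Real.log (r x) ∂μ :=
        integral_add hint hlr_int
    _ ≤ ∫ x, Real.log (f x).toReal ∂μ + 0 := by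
        refine add_le_add_right ?_ _
        calc ∫ x, Real.log (r x) ∂μ ≤ ∫ x, (r x - 1) ∂μ := by
              refine integral_mono_ae hlr_int (hr_int.sub (integrable_const 1)) ?_
              filter_upwards [hlog] with x hx using hx.2
          _ = ∫ x, r x ∂μ - 1 := by
              rw [integral_sub hr_int (integrable_const 1)]
              simp
          _ ≤ 0 := by linarith
    _ = ∫ x, Real.log (f x).toReal ∂μ := add_zero _

lemma withDensity_fst_prod {P Q R : Measure ℝ} [IsProbabilityMeasure P]
    [IsProbabilityMeasure Q] [IsProbabilityMeasure R] (hPQ : P ≪ Q) :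
    (Q.prod R).withDensity (fun p => P.rnDeriv Q p.1) = P.prod R := by
  refine (Measure.prod_eq fun s t hs ht => ?_).symm
  rw [withDensity_apply _ (hs.prod ht), ← Measure.prod_restrict,
    ← lintegral_map (Measure.measurable_rnDeriv P Q) measurable_fst,
    Measure.map_fst_prod, lintegral_smul_measure, Measure.restrict_apply_univ,
    Measure.setLIntegral_rnDeriv' hPQ hs, mul_comm, smul_eq_mul]

lemma rnDeriv_prod_fst {P Q R : Measure ℝ} [IsProbabilityMeasure P]
    [IsProbabilityMeasure Q] [IsProbabilityMeasure R] (hPQ : P ≪ Q) :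
    (P.prod R).rnDeriv (Q.prod R) =ᵐ[Q.prod R] fun p => P.rnDeriv Q p.1 := by
  have hmeas : Measurable fun p : ℝ × ℝ => P.rnDeriv Q p.1 :=
    (Measure.measurable_rnDeriv P Q).comp measurable_fst
  have h1 := Measure.rnDeriv_withDensity (Q.prod R) hmeas
  rw [withDensity_fst_prod hPQ] at h1
  exact h1

lemma klDiv_conv_le (P Q R : Measure ℝ) [IsProbabilityMeasure P]
    [IsProbabilityMeasure Q] [IsProbabilityMeasure R] :
    klDiv ((P.prod R).map (fun p => p.1 + p.2)) ((Q.prod R).map (fun p => p.1 + p.2))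
      ≤ klDiv P Q := by
  by_cases h : P ≪ Q ∧ Integrable (fun x => Real.log (P.rnDeriv Q x).toReal) P
  · obtain ⟨hac, hint⟩ := h
    have hadd : Measurable fun p : ℝ × ℝ => p.1 + p.2 := measurable_add
    have hprodAC : P.prod R ≪ Q.prod R := hac.prod Measure.AbsolutelyContinuous.rfl
    have hsm : ∀ m : Measure ℝ, AEStronglyMeasurable (fun x => Real.log (P.rnDeriv Q x).toReal) m :=
      fun m => (Real.measurable_log.comp
        (Measure.measurable_rnDeriv P Q).ennreal_toReal).aestronglyMeasurable
    have hae : (fun p => Real.log ((P.prod R).rnDeriv (Q.prod R) p).toReal)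
        =ᵐ[P.prod R] fun p : ℝ × ℝ => Real.log (P.rnDeriv Q p.1).toReal := by
      filter_upwards [hprodAC.ae_le (rnDeriv_prod_fst hac)] with p hp
      rw [hp]
    have hfst : (P.prod R).map Prod.fst = P := by
      rw [Measure.map_fst_prod]; simp
    have hint2 : Integrable
        (fun p => Real.log ((P.prod R).rnDeriv (Q.prod R) p).toReal) (P.prod R) := by
      have h1 : Integrable (fun x => Real.log (P.rnDeriv Q x).toReal)
          ((P.prod R).map Prod.fst) := by rw [hfst]; exact hint
      have h2 := (integrable_map_measure (hsm _) measurable_fst.aemeasurable).mp h1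
      exact h2.congr hae.symm
    have hval : ∫ p, Real.log ((P.prod R).rnDeriv (Q.prod R) p).toReal ∂(P.prod R)
        = ∫ x, Real.log (P.rnDeriv Q x).toReal ∂P := by
      rw [integral_congr_ae hae]
      have h3 := integral_map (μ := P.prod R) (φ := Prod.fst)
        measurable_fst.aemeasurable (hsm _)
      rw [hfst] at h3
      exact h3.symm
    obtain ⟨hI, hle⟩ := dpi_map (P.prod R) (Q.prod R) hadd hprodAC hint2
    rw [klDiv, klDiv, if_pos ⟨hprodAC.map hadd, hI⟩, if_pos ⟨hac, hint⟩]
    exact EReal.coe_le_coe_iff.mpr (hle.trans (le_of_eq hval))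
  · have hTop : klDiv P Q = ⊤ := by rw [klDiv, if_neg h]
    rw [hTop]
    exact le_top

/-- Data-processing inequality for the addition of independent noise:
`D(P_{N+Z} ‖ P_{N'+Z}) ≤ D(P_N ‖ P_{N'})`. -/
theorem stmt_3 {Ω : Type*} [MeasurableSpace Ω] (μ : Measure Ω) [IsProbabilityMeasure μ]
    (N N' Z : Ω → ℝ) (hN : Measurable N) (hN' : Measurable N') (hZ : Measurable Z)
    (hNZ : IndepFun N Z μ) (hN'Z : IndepFun N' Z μ) :
    klDiv (μ.map (fun ω => N ω + Z ω)) (μ.map (fun ω => N' ω + Z ω))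
      ≤ klDiv (μ.map N) (μ.map N') := by
  haveI : IsProbabilityMeasure (μ.map N) := Measure.isProbabilityMeasure_map hN.aemeasurable
  haveI : IsProbabilityMeasure (μ.map N') := Measure.isProbabilityMeasure_map hN'.aemeasurable
  haveI : IsProbabilityMeasure (μ.map Z) := Measure.isProbabilityMeasure_map hZ.aemeasurable
  have hadd : Measurable fun p : ℝ × ℝ => p.1 + p.2 := measurable_add
  have hmapN : μ.map (fun ω => N ω + Z ω) = ((μ.map N).prod (μ.map Z)).map (fun p => p.1 + p.2) := by
    rw [← (indepFun_iff_map_prod_eq_prod_map_map hN.aemeasurable hZ.aemeasurable).mp hNZ,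
      Measure.map_map hadd (hN.prodMk hZ)]
    rfl
  have hmapN' : μ.map (fun ω => N' ω + Z ω)
      = ((μ.map N').prod (μ.map Z)).map (fun p => p.1 + p.2) := by
    rw [← (indepFun_iff_map_prod_eq_prod_map_map hN'.aemeasurable hZ.aemeasurable).mp hN'Z,
      Measure.map_map hadd (hN'.prodMk hZ)]
    rfl
  rw [hmapN, hmapN']
  exact klDiv_conv_le (μ.map N) (μ.map N') (μ.map Z)
end
end

section
/- Fix E > 0 and σ² > 0. Let N be a zero-mean real random variable with probability density, variance σ², and finite differential entropy, and let X_G ∼ N(0, E) be independent of N. Then the communication rate achieved by a Gaussian input over the non-Gaussian additive-noise channel is at least the Gaussian-equivalent capacity: I(X_G ; X_G + N) ≥ ½·log(1 + E/σ²). -/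
open MeasureTheory ProbabilityTheory Real
open scoped NNReal ENNReal Classical

noncomputable section

section Aux
open Filter


lemma tendsto_mul_exp_neg_mul_sq {b : ℝ} (hb : 0 < b) :
    Tendsto (fun x : ℝ => x * Real.exp (-b * x ^ 2)) atTop (nhds 0) := by
  have h := rpow_mul_exp_neg_mul_sq_isLittleO_exp_neg hb 1
  have h2 : Tendsto (fun x : ℝ => Real.exp (-(1/2) * x)) atTop (nhds 0) := by
    apply Real.tendsto_exp_atBot.comp
    exact tendsto_id.const_mul_atTop_of_neg (by norm_num)
  have h3 := h.isBigO.trans_tendsto h2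
  refine h3.congr' ?_
  filter_upwards [eventually_gt_atTop (0:ℝ)] with x hx
  rw [Real.rpow_one]

lemma tendsto_exp_neg_mul_sq_atTop {b : ℝ} (hb : 0 < b) :
    Tendsto (fun x : ℝ => Real.exp (-b * x ^ 2)) atTop (nhds 0) := by
  apply Real.tendsto_exp_atBot.comp
  have : Tendsto (fun x : ℝ => x ^ 2) atTop atTop := by
    simpa using tendsto_pow_atTop (two_ne_zero)
  exact this.const_mul_atTop_of_neg (neg_lt_zero.mpr hb) |>.congr (by intro x; ring_nf)

lemma integrable_sq_mul_exp_neg_mul_sq {b : ℝ} (hb : 0 < b) :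
    Integrable (fun x : ℝ => x ^ 2 * Real.exp (-b * x ^ 2)) := by
  have hb2 : 0 < b / 2 := by linarith
  refine Integrable.mono' ((integrable_exp_neg_mul_sq hb2).const_mul (2/b)) ?_ ?_
  · exact ((measurable_id.pow_const 2).mul
      (((measurable_id.pow_const 2).const_mul (-b)).exp)).aestronglyMeasurable
  · refine Filter.Eventually.of_forall fun x => ?_
    rw [Real.norm_eq_abs, abs_mul, abs_of_nonneg (sq_nonneg x), abs_of_nonneg (Real.exp_pos _).le]
    have h1 : x ^ 2 ≤ 2 / b * Real.exp (b / 2 * x ^ 2) := by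
      have h := Real.add_one_le_exp (b / 2 * x ^ 2)
      have h2b : (0:ℝ) < 2 / b := by positivity
      have h' : b / 2 * x ^ 2 ≤ Real.exp (b / 2 * x ^ 2) := by linarith
      calc x ^ 2 = 2 / b * (b / 2 * x ^ 2) := by field_simp
        _ ≤ 2 / b * Real.exp (b / 2 * x ^ 2) := mul_le_mul_of_nonneg_left h' h2b.le
    calc x ^ 2 * Real.exp (-b * x ^ 2)
        ≤ 2 / b * Real.exp (b / 2 * x ^ 2) * Real.exp (-b * x ^ 2) := by
          exact mul_le_mul_of_nonneg_right h1 (Real.exp_pos _).le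
      _ = 2 / b * Real.exp (-(b/2) * x ^ 2) := by rw [mul_assoc, ← Real.exp_add]; ring_nf

lemma integral_id_mul_exp_neg_mul_sq {b : ℝ} (hb : 0 < b) :
    ∫ x : ℝ, x * Real.exp (-b * x ^ 2) = 0 := by
  have hderiv : ∀ x : ℝ, HasDerivAt (fun x : ℝ => -(2*b)⁻¹ * Real.exp (-b * x ^ 2))
      (x * Real.exp (-b * x ^ 2)) x := by
    intro x
    have h1 : HasDerivAt (fun x : ℝ => -b * x ^ 2) (-b * (2 * x)) x := by
      simpa using ((hasDerivAt_pow 2 x).const_mul (-b))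
    have := (h1.exp).const_mul (-(2*b)⁻¹)
    refine this.congr_deriv ?_
    field_simp
  have htop : Tendsto (fun x : ℝ => -(2*b)⁻¹ * Real.exp (-b * x ^ 2)) atTop (nhds 0) := by
    have h0 := (tendsto_exp_neg_mul_sq_atTop hb).const_mul (-(2*b)⁻¹)
    rw [mul_zero] at h0; exact h0
  have hbot : Tendsto (fun x : ℝ => -(2*b)⁻¹ * Real.exp (-b * x ^ 2)) atBot (nhds 0) := by
    have := htop.comp (tendsto_neg_atBot_atTop : Tendsto (fun x : ℝ => -x) atBot atTop)
    refine this.congr fun x => ?_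
    simp [Function.comp, neg_sq]
  have := MeasureTheory.integral_of_hasDerivAt_of_tendsto hderiv
    (integrable_mul_exp_neg_mul_sq hb) hbot htop
  simpa using this

lemma integral_sq_mul_exp_neg_mul_sq {b : ℝ} (hb : 0 < b) :
    ∫ x : ℝ, x ^ 2 * Real.exp (-b * x ^ 2) = (2*b)⁻¹ * Real.sqrt (π / b) := by
  set F : ℝ → ℝ := fun x => -(2*b)⁻¹ * (x * Real.exp (-b * x ^ 2)) with hF
  have hderiv : ∀ x : ℝ, HasDerivAt F
      (x ^ 2 * Real.exp (-b * x ^ 2) - (2*b)⁻¹ * Real.exp (-b * x ^ 2)) x := by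
    intro x
    have h1 : HasDerivAt (fun x : ℝ => -b * x ^ 2) (-b * (2 * x)) x := by
      simpa using ((hasDerivAt_pow 2 x).const_mul (-b))
    have h2 : HasDerivAt (fun x : ℝ => x * Real.exp (-b * x ^ 2))
        (1 * Real.exp (-b * x ^ 2) + x * (Real.exp (-b * x ^ 2) * (-b * (2 * x)))) x :=
      (hasDerivAt_id x).mul h1.exp
    have := h2.const_mul (-(2*b)⁻¹)
    refine this.congr_deriv ?_
    field_simp
    ring
  have hint : Integrable (fun x : ℝ =>
      x ^ 2 * Real.exp (-b * x ^ 2) - (2*b)⁻¹ * Real.exp (-b * x ^ 2)) :=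
    (integrable_sq_mul_exp_neg_mul_sq hb).sub ((integrable_exp_neg_mul_sq hb).const_mul _)
  have htop : Tendsto F atTop (nhds 0) := by
    have h0 := (tendsto_mul_exp_neg_mul_sq hb).const_mul (-(2*b)⁻¹)
    rw [mul_zero] at h0; exact h0
  have hbot : Tendsto F atBot (nhds 0) := by
    have := htop.comp (tendsto_neg_atBot_atTop : Tendsto (fun x : ℝ => -x) atBot atTop)
    have heq : (F ∘ fun x : ℝ => -x) = fun x => -(F x) := by
      funext x; simp [hF, Function.comp, neg_sq]
    rw [heq] at this
    simpa using this.neg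
  have key := MeasureTheory.integral_of_hasDerivAt_of_tendsto hderiv hint hbot htop
  rw [integral_sub (integrable_sq_mul_exp_neg_mul_sq hb)
    ((integrable_exp_neg_mul_sq hb).const_mul _), integral_const_mul, integral_gaussian] at key
  linarith [key]




lemma integral_gaussianReal_eq (m : ℝ) {v : ℝ≥0} (hv : v ≠ 0) (g : ℝ → ℝ) :
    ∫ x, g x ∂(gaussianReal m v) = ∫ x, gaussianPDFReal m v x * g x := by
  rw [gaussianReal_of_var_ne_zero _ hv, gaussianPDF_def]
  have h : ∀ x : ℝ, ENNReal.ofReal (gaussianPDFReal m v x)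
      = ((Real.toNNReal (gaussianPDFReal m v x) : ℝ≥0) : ℝ≥0∞) := fun x => rfl
  simp_rw [h]
  rw [integral_withDensity_eq_integral_smul (measurable_gaussianPDFReal m v).real_toNNReal g]
  congr 1; funext x
  rw [NNReal.smul_def, Real.coe_toNNReal _ (gaussianPDFReal_nonneg m v x), smul_eq_mul]

lemma integrable_gaussianReal_iff (m : ℝ) {v : ℝ≥0} (hv : v ≠ 0) (g : ℝ → ℝ) :
    Integrable g (gaussianReal m v)
      ↔ Integrable (fun x => gaussianPDFReal m v x * g x) volume := by
  rw [gaussianReal_of_var_ne_zero _ hv, gaussianPDF_def]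
  have h : ∀ x : ℝ, ENNReal.ofReal (gaussianPDFReal m v x)
      = ((Real.toNNReal (gaussianPDFReal m v x) : ℝ≥0) : ℝ≥0∞) := fun x => rfl
  simp_rw [h]
  rw [integrable_withDensity_iff_integrable_smul (measurable_gaussianPDFReal m v).real_toNNReal]
  constructor <;> intro hi <;> refine hi.congr (Filter.Eventually.of_forall fun x => ?_) <;>
    simp only [NNReal.smul_def, Real.coe_toNNReal _ (gaussianPDFReal_nonneg m v x), smul_eq_mul]

lemma gaussianPDFReal_zero_mul (m : ℝ) {v : ℝ≥0} (g : ℝ → ℝ) (x : ℝ) :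
    gaussianPDFReal 0 v x * g x
      = (Real.sqrt (2 * π * v))⁻¹ * (g x * Real.exp (-(2 * (v:ℝ))⁻¹ * x ^ 2)) := by
  rw [gaussianPDFReal]
  rcases eq_or_ne (v : ℝ) 0 with hv | hv
  · simp [hv]
  · have : -(x - 0)^2 / (2*(v:ℝ)) = -(2 * (v:ℝ))⁻¹ * x ^ 2 := by field_simp; ring
    rw [this]; ring

lemma integral_id_gaussianReal {v : ℝ≥0} (hv : v ≠ 0) :
    ∫ x, x ∂(gaussianReal 0 v) = 0 := by
  have hvpos : (0:ℝ) < v := lt_of_le_of_ne (v.coe_nonneg) (by exact_mod_cast (Ne.symm hv))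
  have hb : (0:ℝ) < (2 * (v:ℝ))⁻¹ := by positivity
  rw [integral_gaussianReal_eq 0 hv]
  simp_rw [gaussianPDFReal_zero_mul 0 (fun x : ℝ => x)]
  rw [integral_const_mul, integral_id_mul_exp_neg_mul_sq hb, mul_zero]

lemma integral_sq_gaussianReal {v : ℝ≥0} (hv : v ≠ 0) :
    ∫ x, x ^ 2 ∂(gaussianReal 0 v) = (v : ℝ) := by
  have hvpos : (0:ℝ) < v := lt_of_le_of_ne (v.coe_nonneg) (by exact_mod_cast (Ne.symm hv))
  have hb : (0:ℝ) < (2 * (v:ℝ))⁻¹ := by positivity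
  rw [integral_gaussianReal_eq 0 hv]
  simp_rw [gaussianPDFReal_zero_mul 0 (fun x : ℝ => x ^ 2)]
  rw [integral_const_mul, integral_sq_mul_exp_neg_mul_sq hb]
  have h2b : (2 * (2 * (v:ℝ))⁻¹)⁻¹ = (v:ℝ) := by field_simp
  have hsq : Real.sqrt (π / (2 * (v:ℝ))⁻¹) = Real.sqrt (2 * π * v) := by
    congr 1; field_simp
  rw [h2b, hsq]
  have hs : (0:ℝ) < Real.sqrt (2*π*v) := Real.sqrt_pos.mpr (by positivity)
  field_simp

lemma integrable_sq_gaussianReal {v : ℝ≥0} (hv : v ≠ 0) :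
    Integrable (fun x : ℝ => x ^ 2) (gaussianReal 0 v) := by
  have hvpos : (0:ℝ) < v := lt_of_le_of_ne (v.coe_nonneg) (by exact_mod_cast (Ne.symm hv))
  have hb : (0:ℝ) < (2 * (v:ℝ))⁻¹ := by positivity
  rw [integrable_gaussianReal_iff 0 hv]
  have h := (integrable_sq_mul_exp_neg_mul_sq hb).const_mul (Real.sqrt (2 * π * v))⁻¹
  exact h.congr (Filter.Eventually.of_forall fun x =>
    (gaussianPDFReal_zero_mul 0 (fun x : ℝ => x ^ 2) x).symm)

lemma measurable_gaussianPDFReal2 (v : ℝ≥0) :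
    Measurable (fun p : ℝ × ℝ => gaussianPDFReal p.1 v p.2) := by
  simp only [gaussianPDFReal]
  fun_prop

lemma gaussianPDFReal_le (m : ℝ) (v : ℝ≥0) (x : ℝ) :
    gaussianPDFReal m v x ≤ (Real.sqrt (2 * π * v))⁻¹ := by
  rw [gaussianPDFReal]
  have h1 : Real.exp (-(x - m)^2 / (2*(v:ℝ))) ≤ 1 := by
    rw [Real.exp_le_one_iff]
    rcases eq_or_ne (v:ℝ) 0 with hv | hv
    · simp [hv]
    · apply div_nonpos_of_nonpos_of_nonneg
      · nlinarith [sq_nonneg (x - m)]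
      · positivity
  nlinarith [Real.sqrt_nonneg (2*π*v), inv_nonneg.mpr (Real.sqrt_nonneg (2*π*v)),
    Real.exp_pos (-(x - m)^2 / (2*(v:ℝ)))]

lemma gaussianPDFReal_mul_pdf (E σ2 : ℝ≥0) (hE : E ≠ 0) (hσ : σ2 ≠ 0) (y x : ℝ) :
    gaussianPDFReal x σ2 y * gaussianPDFReal 0 E x
      = gaussianPDFReal 0 (E + σ2) y *
        gaussianPDFReal ((E:ℝ) * y / ((E:ℝ) + (σ2:ℝ))) (E * σ2 / (E + σ2)) x := by
  have hEp : (0:ℝ) < E := lt_of_le_of_ne (E.coe_nonneg) (by exact_mod_cast (Ne.symm hE))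
  have hσp : (0:ℝ) < σ2 := lt_of_le_of_ne (σ2.coe_nonneg) (by exact_mod_cast (Ne.symm hσ))
  have hsum : (0:ℝ) < (E:ℝ) + (σ2:ℝ) := by linarith
  have hwR : ((E * σ2 / (E + σ2) : ℝ≥0) : ℝ) = (E:ℝ) * (σ2:ℝ) / ((E:ℝ) + (σ2:ℝ)) := by
    push_cast; ring
  have hsumR : ((E + σ2 : ℝ≥0) : ℝ) = (E:ℝ) + (σ2:ℝ) := by push_cast; ring
  simp only [gaussianPDFReal, hwR, hsumR]
  rw [mul_mul_mul_comm, mul_mul_mul_comm ((Real.sqrt (2 * π * ((E:ℝ)+(σ2:ℝ))))⁻¹)]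
  congr 1
  · rw [← mul_inv, ← mul_inv, ← Real.sqrt_mul (by positivity), ← Real.sqrt_mul (by positivity)]
    congr 2
    field_simp
  · rw [← Real.exp_add, ← Real.exp_add]
    congr 1
    field_simp
    ring

lemma integral_gauss_conv (E σ2 : ℝ≥0) (hE : E ≠ 0) (hσ : σ2 ≠ 0) (y : ℝ) :
    ∫ x, gaussianPDFReal x σ2 y ∂(gaussianReal 0 E) = gaussianPDFReal 0 (E + σ2) y := by
  have hsum : (E:ℝ) + (σ2:ℝ) ≠ 0 := by
    have hEp : (0:ℝ) < E := lt_of_le_of_ne (E.coe_nonneg) (by exact_mod_cast (Ne.symm hE))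
    have hσp : (0:ℝ) < σ2 := lt_of_le_of_ne (σ2.coe_nonneg) (by exact_mod_cast (Ne.symm hσ))
    positivity
  have hw : E * σ2 / (E + σ2) ≠ 0 := by
    apply div_ne_zero (mul_ne_zero hE hσ)
    intro h
    exact hsum (by exact_mod_cast congrArg (NNReal.toReal) h)
  rw [integral_gaussianReal_eq 0 hE]
  have key : ∀ x : ℝ, gaussianPDFReal 0 E x * gaussianPDFReal x σ2 y
      = gaussianPDFReal 0 (E + σ2) y *
        gaussianPDFReal ((E:ℝ) * y / ((E:ℝ) + (σ2:ℝ))) (E * σ2 / (E + σ2)) x := by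
    intro x; rw [mul_comm]; exact gaussianPDFReal_mul_pdf E σ2 hE hσ y x
  simp_rw [key]
  rw [integral_const_mul, integral_gaussianPDFReal_eq_one _ hw, mul_one]




/-- Donsker–Varadhan style lower bound for the KL integrand. -/
lemma dv_bound {α : Type*} [MeasurableSpace α] (P Q : Measure α)
    [IsProbabilityMeasure P] [IsProbabilityMeasure Q]
    (f : α → ℝ) (hfm : Measurable f) (hfint : Integrable f P)
    (hexp : ∫⁻ p, ENNReal.ofReal (Real.exp (f p)) ∂Q ≤ 1)
    (hac : P ≪ Q) (hint : Integrable (fun x => Real.log (P.rnDeriv Q x).toReal) P) :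
    ∫ p, f p ∂P ≤ ∫ x, Real.log (P.rnDeriv Q x).toReal ∂P := by
  set r : α → ℝ := fun x => (P.rnDeriv Q x).toReal with hrdef
  have hrm : Measurable r := (Measure.measurable_rnDeriv P Q).ennreal_toReal
  set u : α → ℝ := fun x => Real.exp (f x) / r x with hudef
  have hum : Measurable u := (Real.measurable_exp.comp hfm).div hrm
  have hrpos : ∀ᵐ x ∂P, 0 < P.rnDeriv Q x := Measure.rnDeriv_pos hac
  have hrfin : ∀ᵐ x ∂P, P.rnDeriv Q x < ⊤ :=
    Filter.Eventually.filter_mono hac.ae_le (Measure.rnDeriv_lt_top P Q)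
  have hrpos' : ∀ᵐ x ∂P, 0 < r x := by
    filter_upwards [hrpos, hrfin] with x h1 h2
    exact ENNReal.toReal_pos h1.ne' h2.ne
  have hK : ∫⁻ x, ENNReal.ofReal (u x) ∂P ≤ 1 := by
    have hrw := MeasureTheory.lintegral_rnDeriv_mul hac hum.ennreal_ofReal.aemeasurable
    rw [← hrw]
    have hmono : ∀ᵐ x ∂Q, P.rnDeriv Q x * ENNReal.ofReal (u x)
        ≤ ENNReal.ofReal (Real.exp (f x)) := by
      filter_upwards [Measure.rnDeriv_lt_top P Q] with x hx
      rcases eq_or_ne (P.rnDeriv Q x) 0 with h0 | h0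
      · simp [h0]
      · have htr : 0 < r x := ENNReal.toReal_pos h0 hx.ne
        have h1 : P.rnDeriv Q x = ENNReal.ofReal (r x) := (ENNReal.ofReal_toReal hx.ne).symm
        rw [h1, ← ENNReal.ofReal_mul (ENNReal.toReal_nonneg)]
        have : r x * u x = Real.exp (f x) := by
          rw [hudef]
          field_simp
        rw [this]
    calc ∫⁻ x, P.rnDeriv Q x * ENNReal.ofReal (u x) ∂Q
        ≤ ∫⁻ x, ENNReal.ofReal (Real.exp (f x)) ∂Q := lintegral_mono_ae hmono
      _ ≤ 1 := hexp
  have hgl : ∀ᵐ x ∂P, f x - Real.log (r x) = Real.log (u x) := by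
    filter_upwards [hrpos'] with x hx
    rw [hudef]
    simp only
    rw [Real.log_div (Real.exp_ne_zero _) hx.ne', Real.log_exp]
  have hupos : ∀ᵐ x ∂P, 0 < u x := by
    filter_upwards [hrpos'] with x hx
    exact div_pos (Real.exp_pos _) hx
  have hgint : Integrable (fun x => f x - Real.log (r x)) P := hfint.sub hint
  have hulog_int : Integrable (fun x => Real.log (u x)) P := hgint.congr hgl
  have hle : ∀ᵐ x ∂P, Real.log (u x) + 1 ≤ u x := by
    filter_upwards [hupos] with x hx
    linarith [Real.log_le_sub_one_of_pos hx]
  have hint1 : Integrable (fun x => Real.log (u x) + 1) P := hulog_int.add (integrable_const 1)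
  have h2 : ∫ x, (Real.log (u x) + 1) ∂P ≤ (∫⁻ x, ENNReal.ofReal (u x) ∂P).toReal := by
    rw [integral_eq_lintegral_pos_part_sub_lintegral_neg_part hint1]
    have hfin : ∫⁻ x, ENNReal.ofReal (u x) ∂P ≠ ⊤ :=
      (lt_of_le_of_lt hK ENNReal.one_lt_top).ne
    have hmono2 : ∫⁻ x, ENNReal.ofReal (Real.log (u x) + 1) ∂P
        ≤ ∫⁻ x, ENNReal.ofReal (u x) ∂P :=
      lintegral_mono_ae (hle.mono fun x hx => ENNReal.ofReal_le_ofReal hx)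
    have hA := ENNReal.toReal_mono hfin hmono2
    have hB : (0:ℝ) ≤ (∫⁻ x, ENNReal.ofReal (-(Real.log (u x) + 1)) ∂P).toReal :=
      ENNReal.toReal_nonneg
    linarith
  have h3 : (∫⁻ x, ENNReal.ofReal (u x) ∂P).toReal ≤ 1 := by
    have := ENNReal.toReal_mono (by simp) hK
    simpa using this
  have h4 : ∫ x, (Real.log (u x) + 1) ∂P = (∫ x, Real.log (u x) ∂P) + 1 := by
    rw [integral_add hulog_int (integrable_const 1), integral_const]
    simp
  have h5 : ∫ x, Real.log (u x) ∂P ≤ 0 := by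
    rw [h4] at h2; linarith
  have h6 : ∫ x, (f x - Real.log (r x)) ∂P = ∫ x, Real.log (u x) ∂P := integral_congr_ae hgl
  rw [integral_sub hfint hint] at h6
  linarith

end Aux

set_option maxHeartbeats 1000000 in
/-- A Gaussian input over the non-Gaussian additive-noise channel achieves at
least the Gaussian-equivalent capacity: `I(X_G ; X_G + N) ≥ ½ log (1 + E/σ²)`. -/
theorem stmt_5 {Ω : Type*} [MeasurableSpace Ω] (μ : Measure Ω) [IsProbabilityMeasure μ]
    (E σ2 : ℝ≥0) (hE : 0 < E) (hσ2 : 0 < σ2)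
    (X N : Ω → ℝ) (hX : Measurable X) (hN : Measurable N)
    (hXlaw : μ.map X = gaussianReal 0 E)
    (hNac : μ.map N ≪ volume)
    (hNint : Integrable N μ) (hNmean : ∫ ω, N ω ∂μ = 0)
    (hNL2 : MemLp N 2 μ) (hNvar : variance N μ = (σ2 : ℝ))
    (hNent : HasFiniteDiffEntropy (μ.map N))
    (hXN : IndepFun X N μ) :
    ((Real.log (1 + (E : ℝ) / (σ2 : ℝ)) / 2 : ℝ) : EReal)
      ≤ mutualInfo μ X (fun ω => X ω + N ω) := by
  have hER : (0:ℝ) < E := hE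
  have hσR : (0:ℝ) < σ2 := hσ2
  have hsumR : (0:ℝ) < (E:ℝ) + (σ2:ℝ) := by linarith
  have hEσ : (E + σ2 : ℝ≥0) ≠ 0 := by positivity
  have hsumRR : ((E + σ2 : ℝ≥0) : ℝ) = (E:ℝ) + (σ2:ℝ) := by push_cast; ring
  set W : Ω → ℝ × ℝ := fun ω => (X ω, X ω + N ω) with hWdef
  have hYm : Measurable (fun ω => X ω + N ω) := hX.add hN
  have hWm : Measurable W := hX.prodMk hYm
  haveI hPprob : IsProbabilityMeasure (μ.map W) := Measure.isProbabilityMeasure_map hWm.aemeasurable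
  haveI : IsProbabilityMeasure (μ.map X) := Measure.isProbabilityMeasure_map hX.aemeasurable
  haveI : IsProbabilityMeasure (μ.map (fun ω => X ω + N ω)) :=
    Measure.isProbabilityMeasure_map hYm.aemeasurable
  set f : ℝ × ℝ → ℝ := fun p =>
    Real.log (gaussianPDFReal p.1 σ2 p.2) - Real.log (gaussianPDFReal 0 (E + σ2) p.2) with hfdef
  have hm2 : Measurable (fun p : ℝ × ℝ => gaussianPDFReal 0 (E + σ2) p.2) :=
    (measurable_gaussianPDFReal 0 (E + σ2)).comp measurable_snd
  have hfm : Measurable f :=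
    (Real.measurable_log.comp (measurable_gaussianPDFReal2 σ2)).sub
      (Real.measurable_log.comp hm2)
  -- moments
  have hXme : MemLp X 2 μ := by
    have h1 : MemLp (id : ℝ → ℝ) 2 (μ.map X) := by
      rw [hXlaw, memLp_two_iff_integrable_sq aestronglyMeasurable_id]
      exact integrable_sq_gaussianReal hE.ne'
    have := (memLp_map_measure_iff aestronglyMeasurable_id hX.aemeasurable).mp h1
    simpa [Function.comp] using this
  have iX2 : Integrable (fun ω => X ω ^ 2) μ :=
    (memLp_two_iff_integrable_sq hX.aestronglyMeasurable).mp hXme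
  have iN2 : Integrable (fun ω => N ω ^ 2) μ :=
    (memLp_two_iff_integrable_sq hN.aestronglyMeasurable).mp hNL2
  have iXN : Integrable (fun ω => X ω * N ω) μ := by
    have := hXN.integrable_mul (hXme.integrable one_le_two) hNint
    exact this
  have EX : ∫ ω, X ω ∂μ = 0 := by
    have h1 : ∫ x, x ∂(μ.map X) = ∫ ω, X ω ∂μ :=
      integral_map hX.aemeasurable aestronglyMeasurable_id
    rw [hXlaw, integral_id_gaussianReal hE.ne'] at h1
    exact h1.symm
  have EX2 : ∫ ω, X ω ^ 2 ∂μ = (E:ℝ) := by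
    have h1 : ∫ x, x ^ 2 ∂(μ.map X) = ∫ ω, X ω ^ 2 ∂μ :=
      integral_map hX.aemeasurable (measurable_id.pow_const 2).aestronglyMeasurable
    rw [hXlaw, integral_sq_gaussianReal hE.ne'] at h1
    exact h1.symm
  have EXN : ∫ ω, X ω * N ω ∂μ = 0 := by
    have h := hXN.integral_mul_eq_mul_integral hX.aestronglyMeasurable hN.aestronglyMeasurable
    simpa [Pi.mul_apply, EX, hNmean] using h
  have EN2 : ∫ ω, N ω ^ 2 ∂μ = (σ2:ℝ) := by
    have h := variance_eq_sub hNL2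
    rw [hNvar, hNmean] at h
    have : (σ2:ℝ) = ∫ ω, N ω ^ 2 ∂μ := by simpa [Pi.pow_apply] using h
    exact this.symm
  have hYsq : ∀ ω, (X ω + N ω) ^ 2 = X ω ^ 2 + (2 * (X ω * N ω) + N ω ^ 2) := by
    intro ω; ring
  have iY2 : Integrable (fun ω => (X ω + N ω) ^ 2) μ := by
    have h : Integrable (fun ω => X ω ^ 2 + (2 * (X ω * N ω) + N ω ^ 2)) μ :=
      iX2.add ((iXN.const_mul 2).add iN2)
    exact h.congr (Filter.Eventually.of_forall fun ω => (hYsq ω).symm)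
  have EY2 : ∫ ω, (X ω + N ω) ^ 2 ∂μ = (E:ℝ) + σ2 := by
    calc ∫ ω, (X ω + N ω) ^ 2 ∂μ
        = ∫ ω, (X ω ^ 2 + (2 * (X ω * N ω) + N ω ^ 2)) ∂μ :=
          integral_congr_ae (Filter.Eventually.of_forall hYsq)
      _ = (∫ ω, X ω ^ 2 ∂μ) + ((∫ ω, 2 * (X ω * N ω) ∂μ) + ∫ ω, N ω ^ 2 ∂μ) := by
          have iA : Integrable (fun ω => 2 * (X ω * N ω) + N ω ^ 2) μ :=
            (iXN.const_mul 2).add iN2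
          rw [integral_add iX2 iA, integral_add (iXN.const_mul 2) iN2]
      _ = (E:ℝ) + σ2 := by
          rw [integral_const_mul, EX2, EXN, EN2]; ring
  -- f along W
  set c1 : ℝ := (Real.sqrt (2 * π * σ2))⁻¹ with hc1def
  set c2 : ℝ := (Real.sqrt (2 * π * ((E:ℝ) + σ2)))⁻¹ with hc2def
  have hc1 : 0 < c1 := by rw [hc1def]; positivity
  have hc2 : 0 < c2 := by rw [hc2def]; positivity
  have hfW : ∀ ω, f (W ω) = (Real.log c1 - N ω ^ 2 / (2 * σ2))
      - (Real.log c2 - (X ω + N ω) ^ 2 / (2 * ((E:ℝ) + σ2))) := by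
    intro ω
    have h1 : gaussianPDFReal (X ω) σ2 (X ω + N ω)
        = c1 * Real.exp (-(N ω ^ 2) / (2 * σ2)) := by
      rw [gaussianPDFReal, hc1def]
      congr 2
      ring
    have h2 : gaussianPDFReal 0 (E + σ2) (X ω + N ω)
        = c2 * Real.exp (-((X ω + N ω) ^ 2) / (2 * ((E:ℝ) + σ2))) := by
      rw [gaussianPDFReal, hc2def, hsumRR]
      congr 2
      ring
    show Real.log (gaussianPDFReal (X ω) σ2 (X ω + N ω))
        - Real.log (gaussianPDFReal 0 (E + σ2) (X ω + N ω)) = _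
    rw [h1, h2, Real.log_mul hc1.ne' (Real.exp_ne_zero _),
      Real.log_mul hc2.ne' (Real.exp_ne_zero _), Real.log_exp, Real.log_exp]
    ring
  have hifW : Integrable (fun ω => f (W ω)) μ := by
    have h : Integrable (fun ω => (Real.log c1 - N ω ^ 2 / (2 * σ2))
        - (Real.log c2 - (X ω + N ω) ^ 2 / (2 * ((E:ℝ) + σ2)))) μ :=
      ((integrable_const _).sub (iN2.div_const _)).sub
        ((integrable_const _).sub (iY2.div_const _))
    exact h.congr (Filter.Eventually.of_forall fun ω => (hfW ω).symm)
  have hIfμ : ∫ ω, f (W ω) ∂μ = Real.log (1 + (E:ℝ) / σ2) / 2 := by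
    calc ∫ ω, f (W ω) ∂μ
        = ∫ ω, ((Real.log c1 - N ω ^ 2 / (2 * σ2))
            - (Real.log c2 - (X ω + N ω) ^ 2 / (2 * ((E:ℝ) + σ2)))) ∂μ :=
          integral_congr_ae (Filter.Eventually.of_forall hfW)
      _ = (Real.log c1 - (∫ ω, N ω ^ 2 ∂μ) / (2 * σ2))
            - (Real.log c2 - (∫ ω, (X ω + N ω) ^ 2 ∂μ) / (2 * ((E:ℝ) + σ2))) := by
          have i1 : Integrable (fun ω => Real.log c1 - N ω ^ 2 / (2 * (σ2:ℝ))) μ :=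
            (integrable_const _).sub (iN2.div_const _)
          have i2 : Integrable (fun ω => Real.log c2
              - (X ω + N ω) ^ 2 / (2 * ((E:ℝ) + σ2))) μ :=
            (integrable_const _).sub (iY2.div_const _)
          rw [integral_sub i1 i2,
            integral_sub (integrable_const _) (iN2.div_const _),
            integral_sub (integrable_const _) (iY2.div_const _),
            integral_div, integral_div, integral_const, integral_const]
          simp
      _ = Real.log c1 - Real.log c2 := by
          rw [EN2, EY2]
          field_simp
          ring
      _ = Real.log (1 + (E:ℝ) / σ2) / 2 := by
          rw [hc1def, hc2def, Real.log_inv, Real.log_inv,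
            Real.log_sqrt (by positivity), Real.log_sqrt (by positivity)]
          have h1 : (1 + (E:ℝ) / σ2) = (2 * π * ((E:ℝ) + σ2)) / (2 * π * σ2) := by
            field_simp
            ring
          rw [h1, Real.log_div (by positivity) (by positivity)]
          ring
  -- the exponential integral over Q equals 1
  have hexpQ : ∫⁻ p, ENNReal.ofReal (Real.exp (f p))
      ∂((μ.map X).prod (μ.map (fun ω => X ω + N ω))) = 1 := by
    have hptw : ∀ p : ℝ × ℝ, Real.exp (f p)
        = gaussianPDFReal p.1 σ2 p.2 / gaussianPDFReal 0 (E + σ2) p.2 := by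
      intro p
      show Real.exp (Real.log _ - Real.log _) = _
      rw [Real.exp_sub, Real.exp_log (gaussianPDFReal_pos _ _ _ hσ2.ne'),
        Real.exp_log (gaussianPDFReal_pos _ _ _ hEσ)]
    simp_rw [hptw]
    rw [lintegral_prod_symm (fun p : ℝ × ℝ =>
        ENNReal.ofReal (gaussianPDFReal p.1 σ2 p.2 / gaussianPDFReal 0 (E + σ2) p.2))
      ((((measurable_gaussianPDFReal2 σ2).div hm2).ennreal_ofReal).aemeasurable)]
    have inner : ∀ y : ℝ, (∫⁻ x, ENNReal.ofReal
        (gaussianPDFReal x σ2 y / gaussianPDFReal 0 (E + σ2) y) ∂(μ.map X)) = 1 := by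
      intro y
      have hb : (0:ℝ) < gaussianPDFReal 0 (E + σ2) y := gaussianPDFReal_pos _ _ _ hEσ
      have hdiv : ∀ x : ℝ, ENNReal.ofReal (gaussianPDFReal x σ2 y / gaussianPDFReal 0 (E + σ2) y)
          = ENNReal.ofReal (gaussianPDFReal x σ2 y)
            * ENNReal.ofReal ((gaussianPDFReal 0 (E + σ2) y)⁻¹) := by
        intro x
        rw [← ENNReal.ofReal_mul (gaussianPDFReal_nonneg _ _ _), div_eq_mul_inv]
      simp_rw [hdiv]
      rw [lintegral_mul_const' _ _ ENNReal.ofReal_ne_top]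
      have hInt : Integrable (fun x => gaussianPDFReal x σ2 y) (μ.map X) := by
        rw [hXlaw]
        refine Integrable.mono' (integrable_const ((Real.sqrt (2 * π * σ2))⁻¹)) ?_ ?_
        · exact (by simp only [gaussianPDFReal]; fun_prop :
            Measurable fun x : ℝ => gaussianPDFReal x σ2 y).aestronglyMeasurable
        · refine Filter.Eventually.of_forall fun x => ?_
          rw [Real.norm_eq_abs, abs_of_nonneg (gaussianPDFReal_nonneg _ _ _)]
          exact gaussianPDFReal_le _ _ _
      have h1 : ∫⁻ x, ENNReal.ofReal (gaussianPDFReal x σ2 y) ∂(μ.map X)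
          = ENNReal.ofReal (gaussianPDFReal 0 (E + σ2) y) := by
        rw [← ofReal_integral_eq_lintegral_ofReal hInt
          (Filter.Eventually.of_forall fun x => gaussianPDFReal_nonneg _ _ _)]
        rw [hXlaw, integral_gauss_conv E σ2 hE.ne' hσ2.ne' y]
      rw [h1, ← ENNReal.ofReal_mul hb.le, mul_inv_cancel₀ hb.ne', ENNReal.ofReal_one]
    simp_rw [inner]
    simp
  -- conclude
  rw [mutualInfo, klDiv]
  split_ifs with h
  · obtain ⟨hac, hint⟩ := h
    rw [EReal.coe_le_coe_iff]
    have hIf : ∫ p, f p ∂(μ.map W) = Real.log (1 + (E:ℝ) / σ2) / 2 := by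
      rw [integral_map hWm.aemeasurable hfm.aestronglyMeasurable]
      exact hIfμ
    have hfint : Integrable f (μ.map W) :=
      (integrable_map_measure hfm.aestronglyMeasurable hWm.aemeasurable).mpr hifW
    have := dv_bound (μ.map W) ((μ.map X).prod (μ.map (fun ω => X ω + N ω)))
      f hfm hfint (le_of_eq hexpQ) hac hint
    rw [hIf] at this
    exact this
  · exact le_top
end
end

section
/- Fix E > 0 and σ² > 0. Let N be a zero-mean real random variable with probability density, variance σ², and finite differential entropy, and let N_G ∼ N(0, σ²). Then for every zero-mean real random variable X with a probability density, independent of N, with Var(X) ≤ E and X + N of finite differential entropy, the communication rate over the non-Gaussian additive-noise channel satisfies I(X ; X + N) ≤ ½·log(1 + E/σ²) + D(P_N ‖ P_{N_G}). -/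
open MeasureTheory ProbabilityTheory Real
open scoped NNReal ENNReal Classical

noncomputable section

/- ### Auxiliary lemmas -/

section Aux

variable {α : Type*} [MeasurableSpace α]

lemma rnDeriv_ae_eq_of_eq_withDensity {P Q : Measure α} [SigmaFinite Q] {w : α → ℝ≥0∞}
    (hw : Measurable w) (h : P = Q.withDensity w) : P.rnDeriv Q =ᵐ[P] w := by
  have hac : P ≪ Q := h ▸ withDensity_absolutelyContinuous Q w
  have h1 : P.rnDeriv Q =ᵐ[Q] w := by
    rw [h]; exact Measure.rnDeriv_withDensity Q hw
  exact hac.ae_eq h1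

lemma klDiv_eq_of {P Q : Measure α} {w : α → ℝ≥0∞}
    (hPQ : P ≪ Q) (hw : P.rnDeriv Q =ᵐ[P] w)
    (hint : Integrable (fun x => Real.log (w x).toReal) P) :
    klDiv P Q = ((∫ x, Real.log (w x).toReal ∂P : ℝ) : EReal) := by
  have he : (fun x => Real.log (P.rnDeriv Q x).toReal) =ᵐ[P]
      fun x => Real.log (w x).toReal := hw.mono fun x hx => by simp only [hx]
  rw [klDiv, if_pos ⟨hPQ, hint.congr he.symm⟩, integral_congr_ae he]

/-- product of two densities wrt Lebesgue. -/
lemma withDensity_prod_withDensity {f g : ℝ → ℝ≥0∞} (hf : Measurable f) (hg : Measurable g)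
    [SigmaFinite (volume.withDensity f)] [SigmaFinite (volume.withDensity g)] :
    (volume.withDensity f).prod (volume.withDensity g)
      = ((volume : Measure ℝ).prod volume).withDensity (fun p => f p.1 * g p.2) := by
  refine Measure.prod_eq fun s t hs ht => ?_
  rw [withDensity_apply _ (hs.prod ht), withDensity_apply _ hs, withDensity_apply _ ht,
    ← Measure.prod_restrict,
    lintegral_prod_mul hf.aemeasurable hg.aemeasurable]

/-- mapping a density through a measurable equivalence. -/
lemma map_withDensity_equiv {β : Type*} [MeasurableSpace β] (e : α ≃ᵐ β) (μ : Measure α)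
    {k : α → ℝ≥0∞} (hk : Measurable k) :
    (μ.withDensity k).map e = (μ.map e).withDensity (fun y => k (e.symm y)) := by
  ext s hs
  rw [MeasurableEquiv.map_apply, withDensity_apply _ hs,
    setLIntegral_map (f := fun y => k (e.symm y)) hs (hk.comp e.symm.measurable) e.measurable,
    withDensity_apply _ (e.measurable hs)]
  refine setLIntegral_congr_fun_ae (e.measurable hs) (ae_of_all _ fun x _ => ?_)
  simp

/-- The shear `(x, y) ↦ (x, x + y)` as a measurable equivalence of `ℝ × ℝ`. -/
def shearEquiv : (ℝ × ℝ) ≃ᵐ (ℝ × ℝ) :=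
{ toEquiv :=
  { toFun := fun p => (p.1, p.1 + p.2)
    invFun := fun p => (p.1, p.2 - p.1)
    left_inv := fun p => by simp
    right_inv := fun p => by simp }
  measurable_toFun := measurable_fst.prodMk (measurable_fst.add measurable_snd)
  measurable_invFun := measurable_fst.prodMk (measurable_snd.sub measurable_fst) }

lemma integrable_log_rnDeriv {P : Measure ℝ} [SigmaFinite P] (hac : P ≪ volume)
    (hint : Integrable
      (fun x => (P.rnDeriv volume x).toReal * Real.log (P.rnDeriv volume x).toReal)) :
    Integrable (fun x => Real.log (P.rnDeriv volume x).toReal) P := by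
  have hFm : Measurable (P.rnDeriv volume) := Measure.measurable_rnDeriv _ _
  have hfin : ∀ᵐ x ∂(volume : Measure ℝ), P.rnDeriv volume x < ⊤ :=
    Measure.rnDeriv_lt_top _ _
  have h := (integrable_withDensity_iff_integrable_smul' hFm hfin
      (g := fun x => Real.log (P.rnDeriv volume x).toReal)).mpr (by
        simpa [smul_eq_mul] using hint)
  rwa [Measure.withDensity_rnDeriv_eq _ _ hac] at h

/-- Gibbs-type inequality: a sub-probability density `ψ` gives a lower bound for the
log-density integral. -/
lemma gibbs_aux (P : Measure ℝ) [IsProbabilityMeasure P] {h : ℝ → ℝ≥0∞} (hh : Measurable h)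
    (hP : P = volume.withDensity h) {ψ : ℝ → ℝ} (hψm : Measurable ψ) (hψpos : ∀ x, 0 < ψ x)
    (hψ1 : ∫⁻ x, ENNReal.ofReal (ψ x) ∂(volume : Measure ℝ) ≤ 1)
    (h1 : Integrable (fun x => Real.log (h x).toReal) P)
    (h2 : Integrable (fun x => Real.log (ψ x)) P) :
    ∫ x, Real.log (ψ x) ∂P ≤ ∫ x, Real.log (h x).toReal ∂P := by
  have hac : P ≪ volume := hP ▸ withDensity_absolutelyContinuous _ _
  have hfinv : ∀ᵐ x ∂(volume : Measure ℝ), h x < ⊤ := by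
    refine ae_lt_top hh ?_
    have : ∫⁻ x, h x ∂(volume : Measure ℝ) = P Set.univ := by
      rw [hP, withDensity_apply _ MeasurableSet.univ, setLIntegral_univ]
    rw [this, measure_univ]; exact ENNReal.one_ne_top
  have hfin : ∀ᵐ x ∂P, h x < ⊤ := hac.ae_le hfinv
  have hpos : ∀ᵐ x ∂P, 0 < h x := by
    have hms : MeasurableSet {x : ℝ | h x = 0} := hh (measurableSet_singleton 0)
    have hz : P {x | h x = 0} = 0 := by
      rw [hP, withDensity_apply _ hms]
      rw [setLIntegral_congr_fun_ae hms (ae_of_all _ fun x hx => hx)]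
      simp
    rw [ae_iff]
    convert hz using 2
    ext x
    simp [pos_iff_ne_zero]
  set r : ℝ → ℝ := fun x => ψ x / (h x).toReal with hr
  have hrm : Measurable r := hψm.div (hh.ennreal_toReal)
  have hrnn : ∀ x, 0 ≤ r x := fun x => div_nonneg (hψpos x).le ENNReal.toReal_nonneg
  have hlin : ∫⁻ x, ENNReal.ofReal (r x) ∂P ≤ 1 := by
    rw [hP, lintegral_withDensity_eq_lintegral_mul _ hh (hrm.ennreal_ofReal)]
    refine le_trans (lintegral_mono_ae ?_) hψ1
    filter_upwards [hfinv] with x hx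
    show h x * ENNReal.ofReal (r x) ≤ ENNReal.ofReal (ψ x)
    rcases eq_or_ne (h x) 0 with h0 | h0
    · simp [h0, hr]
    · have htpos : 0 < (h x).toReal := ENNReal.toReal_pos h0 hx.ne
      rw [hr]
      rw [ENNReal.ofReal_div_of_pos htpos, ENNReal.ofReal_toReal hx.ne]
      rw [ENNReal.mul_div_cancel h0 hx.ne]
  have hri : Integrable r P := by
    refine ⟨hrm.aestronglyMeasurable, ?_⟩
    rw [hasFiniteIntegral_iff_norm]
    calc ∫⁻ x, ENNReal.ofReal ‖r x‖ ∂P = ∫⁻ x, ENNReal.ofReal (r x) ∂P := by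
          refine lintegral_congr fun x => by rw [Real.norm_of_nonneg (hrnn x)]
      _ ≤ 1 := hlin
      _ < ⊤ := ENNReal.one_lt_top
  have hrint_le : ∫ x, r x ∂P ≤ 1 := by
    rw [integral_eq_lintegral_of_nonneg_ae (ae_of_all _ hrnn) hrm.aestronglyMeasurable]
    calc (∫⁻ x, ENNReal.ofReal (r x) ∂P).toReal ≤ (1 : ℝ≥0∞).toReal :=
          ENNReal.toReal_mono ENNReal.one_ne_top hlin
      _ = 1 := by simp
  have hbound : ∀ᵐ x ∂P, Real.log (ψ x) - Real.log (h x).toReal ≤ r x - 1 := by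
    filter_upwards [hpos, hfin] with x hx0 hxt
    have ht : 0 < (h x).toReal := ENNReal.toReal_pos hx0.ne' hxt.ne
    have hrpos : 0 < r x := div_pos (hψpos x) ht
    calc Real.log (ψ x) - Real.log (h x).toReal = Real.log (r x) := by
          rw [hr]; rw [Real.log_div (hψpos x).ne' ht.ne']
      _ ≤ r x - 1 := Real.log_le_sub_one_of_pos hrpos
  have hmono := integral_mono_ae (h2.sub h1) (hri.sub (integrable_const 1)) hbound
  simp only [Pi.sub_apply] at hmono
  rw [integral_sub h2 h1, integral_sub hri (integrable_const 1), integral_const,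
    probReal_univ] at hmono
  simp only [ENNReal.toReal_one, smul_eq_mul, one_mul] at hmono
  linarith

lemma log_gaussianPDFReal {v : ℝ≥0} (hv : v ≠ 0) (x : ℝ) :
    Real.log (gaussianPDFReal 0 v x) = -(Real.log (2 * π * v) / 2) - x ^ 2 / (2 * v) := by
  have hvpos : (0 : ℝ) < v := by
    have : 0 < v := pos_iff_ne_zero.mpr hv
    exact_mod_cast this
  have h2v : (0 : ℝ) < 2 * π * v := by positivity
  rw [gaussianPDFReal, Real.log_mul (by positivity) (Real.exp_ne_zero _), Real.log_inv,
    Real.log_sqrt h2v.le, Real.log_exp]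
  ring_nf

end Aux

/-- Any zero-mean input `X` with density and variance at most `E` over the
channel with noise `N` satisfies
`I(X ; X+N) ≤ ½ log (1 + E/σ²) + D(P_N ‖ P_{N_G})`. -/
theorem stmt_8 {Ω : Type*} [MeasurableSpace Ω] (μ : Measure Ω) [IsProbabilityMeasure μ]
    (E σ2 : ℝ≥0) (hE : 0 < E) (hσ2 : 0 < σ2)
    (X N : Ω → ℝ) (hX : Measurable X) (hN : Measurable N)
    (hNac : μ.map N ≪ volume)
    (hNint : Integrable N μ) (hNmean : ∫ ω, N ω ∂μ = 0)
    (hNL2 : MemLp N 2 μ) (hNvar : variance N μ = (σ2 : ℝ))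
    (hNent : HasFiniteDiffEntropy (μ.map N))
    (hXac : μ.map X ≪ volume)
    (hXint : Integrable X μ) (hXmean : ∫ ω, X ω ∂μ = 0)
    (hXL2 : MemLp X 2 μ) (hXvar : variance X μ ≤ (E : ℝ))
    (hXN : IndepFun X N μ)
    (hSent : HasFiniteDiffEntropy (μ.map (fun ω => X ω + N ω))) :
    mutualInfo μ X (fun ω => X ω + N ω)
      ≤ ((Real.log (1 + (E : ℝ) / (σ2 : ℝ)) / 2 : ℝ) : EReal)
        + klDiv (μ.map N) (gaussianReal 0 σ2) := by
  classical
  -- abbreviations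
  set Y : Ω → ℝ := fun ω => X ω + N ω with hYdef
  have hYm : Measurable Y := hX.add hN
  have hYac : μ.map Y ≪ volume := hSent.1
  haveI hPX : IsProbabilityMeasure (μ.map X) := Measure.isProbabilityMeasure_map hX.aemeasurable
  haveI hPN : IsProbabilityMeasure (μ.map N) := Measure.isProbabilityMeasure_map hN.aemeasurable
  haveI hPY : IsProbabilityMeasure (μ.map Y) := Measure.isProbabilityMeasure_map hYm.aemeasurable
  set F : ℝ → ℝ≥0∞ := (μ.map N).rnDeriv volume with hFdef
  set G : ℝ → ℝ≥0∞ := (μ.map X).rnDeriv volume with hGdef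
  set H : ℝ → ℝ≥0∞ := (μ.map Y).rnDeriv volume with hHdef
  have hFm : Measurable F := Measure.measurable_rnDeriv _ _
  have hGm : Measurable G := Measure.measurable_rnDeriv _ _
  have hHm : Measurable H := Measure.measurable_rnDeriv _ _
  have hNeq : μ.map N = volume.withDensity F := (Measure.withDensity_rnDeriv_eq _ _ hNac).symm
  have hXeq : μ.map X = volume.withDensity G := (Measure.withDensity_rnDeriv_eq _ _ hXac).symm
  have hYeq : μ.map Y = volume.withDensity H := (Measure.withDensity_rnDeriv_eq _ _ hYac).symm
  haveI : SigmaFinite (volume.withDensity F) := by rw [← hNeq]; infer_instance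
  haveI : SigmaFinite (volume.withDensity G) := by rw [← hXeq]; infer_instance
  haveI : SigmaFinite (volume.withDensity H) := by rw [← hYeq]; infer_instance
  -- joint law
  set J : Measure (ℝ × ℝ) := μ.map (fun ω => (X ω, Y ω)) with hJdef
  have hXYm : Measurable (fun ω => (X ω, Y ω)) := hX.prodMk hYm
  haveI : IsProbabilityMeasure J := Measure.isProbabilityMeasure_map hXYm.aemeasurable
  have hJ1 : μ.map (fun ω => (X ω, N ω)) = (μ.map X).prod (μ.map N) :=
    (indepFun_iff_map_prod_eq_prod_map_map hX.aemeasurable hN.aemeasurable).mp hXN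
  have hJ2 : J = ((μ.map X).prod (μ.map N)).map shearEquiv := by
    rw [← hJ1, Measure.map_map shearEquiv.measurable (hX.prodMk hN)]
    rfl
  have hvol : ((volume : Measure ℝ).prod volume).map shearEquiv
      = (volume : Measure ℝ).prod volume := by
    have hmp : MeasurePreserving (fun p : ℝ × ℝ => (p.1, p.1 + p.2))
        ((volume : Measure ℝ).prod volume) ((volume : Measure ℝ).prod volume) :=
      (MeasurePreserving.id volume).skew_product (measurable_fst.add measurable_snd)
        (ae_of_all _ fun x => map_add_left_eq_self volume x)
    exact hmp.map_eq
  have hprod1 : (μ.map X).prod (μ.map N)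
      = ((volume : Measure ℝ).prod volume).withDensity (fun p => G p.1 * F p.2) := by
    rw [hXeq, hNeq]; exact withDensity_prod_withDensity hGm hFm
  have hprod2 : (μ.map X).prod (μ.map Y)
      = ((volume : Measure ℝ).prod volume).withDensity (fun p => G p.1 * H p.2) := by
    rw [hXeq, hYeq]; exact withDensity_prod_withDensity hGm hHm
  have hJd : J = ((volume : Measure ℝ).prod volume).withDensity
      (fun p => G p.1 * F (p.2 - p.1)) := by
    rw [hJ2, hprod1, map_withDensity_equiv (k := fun p => G p.1 * F p.2) shearEquiv _
      ((hGm.comp measurable_fst).mul (hFm.comp measurable_snd)), hvol]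
    rfl
  -- marginals of the joint law
  have hsnd : J.map Prod.snd = μ.map Y := by
    rw [hJdef, Measure.map_map measurable_snd hXYm]
    rfl
  have hsub : J.map (fun p : ℝ × ℝ => p.2 - p.1) = μ.map N := by
    rw [hJdef, Measure.map_map (g := fun p : ℝ × ℝ => p.2 - p.1) (measurable_snd.sub measurable_fst) hXYm]
    congr 1
    funext ω
    show Y ω - X ω = N ω
    simp only [hYdef]
    ring
  -- the set where H vanishes is J-null
  have hBms : MeasurableSet {y : ℝ | H y = 0} := hHm (measurableSet_singleton 0)
  have hμYB : (μ.map Y) {y | H y = 0} = 0 := by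
    rw [hYeq, withDensity_apply _ hBms,
      setLIntegral_congr_fun_ae hBms (ae_of_all _ fun y hy => hy)]
    simp
  have hJB : J (Prod.snd ⁻¹' {y : ℝ | H y = 0}) = 0 := by
    rw [← Measure.map_apply measurable_snd hBms, hsnd]; exact hμYB
  have hk'm : Measurable (fun p : ℝ × ℝ => G p.1 * F (p.2 - p.1)) :=
    (hGm.comp measurable_fst).mul (hFm.comp (measurable_snd.sub measurable_fst))
  have hae0 : ∀ᵐ p ∂((volume : Measure ℝ).prod volume),
      p ∈ Prod.snd ⁻¹' {y : ℝ | H y = 0} → G p.1 * F (p.2 - p.1) = 0 := by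
    have h0 : ∫⁻ p in Prod.snd ⁻¹' {y : ℝ | H y = 0}, G p.1 * F (p.2 - p.1)
        ∂((volume : Measure ℝ).prod volume) = 0 := by
      rw [← withDensity_apply _ (measurable_snd hBms), ← hJd]
      exact hJB
    exact (setLIntegral_eq_zero_iff (measurable_snd hBms) hk'm).mp h0
  -- H is a.e. finite on the product space
  have haeHlt : ∀ᵐ p ∂((volume : Measure ℝ).prod volume), H p.2 ≠ ⊤ := by
    have hTm : MeasurableSet {y : ℝ | H y = ⊤} := hHm (measurableSet_singleton ⊤)
    have hT0 : (volume : Measure ℝ) {y : ℝ | H y = ⊤} = 0 := by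
      have hlt := Measure.rnDeriv_lt_top (μ.map Y) volume
      rw [ae_iff] at hlt
      refine measure_mono_null (fun y hy => ?_) hlt
      simp only [Set.mem_setOf_eq] at hy ⊢
      simp only [not_lt, hy, le_top, top_le_iff]
      exact hy
    have hpre : Prod.snd ⁻¹' {y : ℝ | H y = ⊤} = (Set.univ : Set ℝ) ×ˢ {y : ℝ | H y = ⊤} := by
      ext p; simp
    rw [ae_iff]
    have hss : {p : ℝ × ℝ | ¬H p.2 ≠ ⊤} ⊆ Prod.snd ⁻¹' {y : ℝ | H y = ⊤} := by
      intro p hp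
      simp only [Set.mem_setOf_eq, not_not] at hp
      exact hp
    refine measure_mono_null hss ?_
    rw [hpre, Measure.prod_prod, hT0, mul_zero]
  -- density identity for J relative to the product of the marginals
  set W : ℝ × ℝ → ℝ≥0∞ := fun p => F (p.2 - p.1) / H p.2 with hWdef
  have hWm : Measurable W :=
    (hFm.comp (measurable_snd.sub measurable_fst)).div (hHm.comp measurable_snd)
  have hkey : (fun p : ℝ × ℝ => (G p.1 * H p.2) * W p)
      =ᵐ[(volume : Measure ℝ).prod volume] (fun p => G p.1 * F (p.2 - p.1)) := by
    filter_upwards [hae0, haeHlt] with p h0 hfin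
    rcases eq_or_ne (H p.2) 0 with hH0 | hH0
    · have hz : G p.1 * F (p.2 - p.1) = 0 := h0 hH0
      simp [hz, hH0]
    · calc (G p.1 * H p.2) * W p
          = G p.1 * (H p.2 * (F (p.2 - p.1) / H p.2)) := by rw [hWdef]; ring
        _ = G p.1 * F (p.2 - p.1) := by rw [ENNReal.mul_div_cancel hH0 hfin]
  have hJW : J = ((μ.map X).prod (μ.map Y)).withDensity W := by
    have hq : Measurable fun p : ℝ × ℝ => G p.1 * H p.2 :=
      (hGm.comp measurable_fst).mul (hHm.comp measurable_snd)
    rw [hprod2, ← withDensity_mul _ hq hWm, hJd]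
    exact (withDensity_congr_ae hkey).symm
  have hJac : J ≪ (μ.map X).prod (μ.map Y) := hJW ▸ withDensity_absolutelyContinuous _ _
  have hrnJ : J.rnDeriv ((μ.map X).prod (μ.map Y)) =ᵐ[J] W :=
    rnDeriv_ae_eq_of_eq_withDensity hWm hJW
  -- a.e. positivity and finiteness along J
  have hFgood : ∀ᵐ n ∂(μ.map N), 0 < F n ∧ F n ≠ ⊤ :=
    (Measure.rnDeriv_pos hNac).and (hNac.ae_le (Measure.rnDeriv_ne_top _ _))
  have hHgood : ∀ᵐ y ∂(μ.map Y), 0 < H y ∧ H y ≠ ⊤ :=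
    (Measure.rnDeriv_pos hYac).and (hYac.ae_le (Measure.rnDeriv_ne_top _ _))
  have hFsetm : MeasurableSet {n : ℝ | 0 < F n ∧ F n ≠ ⊤} :=
    (hFm measurableSet_Ioi).inter (hFm (measurableSet_singleton ⊤)).compl
  have hHsetm : MeasurableSet {y : ℝ | 0 < H y ∧ H y ≠ ⊤} :=
    (hHm measurableSet_Ioi).inter (hHm (measurableSet_singleton ⊤)).compl
  have hFJ : ∀ᵐ p ∂J, 0 < F (p.2 - p.1) ∧ F (p.2 - p.1) ≠ ⊤ := by
    rw [← hsub] at hFgood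
    exact (ae_map_iff (measurable_snd.sub measurable_fst).aemeasurable hFsetm).mp hFgood
  have hHJ : ∀ᵐ p ∂J, 0 < H p.2 ∧ H p.2 ≠ ⊤ := by
    rw [← hsnd] at hHgood
    exact (ae_map_iff measurable_snd.aemeasurable hHsetm).mp hHgood
  have hlogW : (fun p => Real.log (W p).toReal)
      =ᵐ[J] fun p : ℝ × ℝ => Real.log (F (p.2 - p.1)).toReal - Real.log (H p.2).toReal := by
    filter_upwards [hFJ, hHJ] with p hf hh
    simp only [hWdef]
    rw [ENNReal.toReal_div, Real.log_div (ENNReal.toReal_pos hf.1.ne' hf.2).ne'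
      (ENNReal.toReal_pos hh.1.ne' hh.2).ne']
  -- integrability of the log-densities
  have hiF : Integrable (fun n => Real.log (F n).toReal) (μ.map N) :=
    integrable_log_rnDeriv hNac hNent.2
  have hiH : Integrable (fun y => Real.log (H y).toReal) (μ.map Y) :=
    integrable_log_rnDeriv hYac hSent.2
  have hiFJ : Integrable (fun p : ℝ × ℝ => Real.log (F (p.2 - p.1)).toReal) J := by
    have h := hiF; rw [← hsub] at h
    exact (integrable_map_measure
      (Real.measurable_log.comp hFm.ennreal_toReal).aestronglyMeasurable
      (measurable_snd.sub measurable_fst).aemeasurable).mp h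
  have hiHJ : Integrable (fun p : ℝ × ℝ => Real.log (H p.2).toReal) J := by
    have h := hiH; rw [← hsnd] at h
    exact (integrable_map_measure
      (Real.measurable_log.comp hHm.ennreal_toReal).aestronglyMeasurable
      measurable_snd.aemeasurable).mp h
  have hiWJ : Integrable (fun p => Real.log (W p).toReal) J :=
    (hiFJ.sub hiHJ).congr hlogW.symm
  -- value of the joint KL divergence
  have hklJ : klDiv J ((μ.map X).prod (μ.map Y))
      = ((∫ n, Real.log (F n).toReal ∂(μ.map N)
          - ∫ y, Real.log (H y).toReal ∂(μ.map Y) : ℝ) : EReal) := by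
    rw [klDiv_eq_of hJac hrnJ hiWJ]
    congr 1
    rw [integral_congr_ae hlogW, integral_sub hiFJ hiHJ]
    congr 1
    · rw [← hsub]
      have hgm : AEStronglyMeasurable (fun n : ℝ => Real.log (F n).toReal)
          (J.map (fun p : ℝ × ℝ => p.2 - p.1)) :=
        (Real.measurable_log.comp hFm.ennreal_toReal).aestronglyMeasurable
      rw [integral_map (φ := fun p : ℝ × ℝ => p.2 - p.1) (measurable_snd.sub measurable_fst).aemeasurable hgm]
    · rw [← hsnd]
      have hgm : AEStronglyMeasurable (fun y : ℝ => Real.log (H y).toReal)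
          (J.map Prod.snd) :=
        (Real.measurable_log.comp hHm.ennreal_toReal).aestronglyMeasurable
      rw [integral_map measurable_snd.aemeasurable hgm]
  -- the Gaussian-noise KL divergence
  have hφm : Measurable (gaussianPDF 0 σ2) := measurable_gaussianPDF 0 σ2
  have hGa : gaussianReal 0 σ2 = volume.withDensity (gaussianPDF 0 σ2) :=
    gaussianReal_of_var_ne_zero 0 hσ2.ne'
  set W2 : ℝ → ℝ≥0∞ := fun n => F n / gaussianPDF 0 σ2 n with hW2def
  have hW2m : Measurable W2 := hFm.div hφm
  have hμNW2 : μ.map N = (gaussianReal 0 σ2).withDensity W2 := by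
    rw [hGa, ← withDensity_mul _ hφm hW2m, hNeq]
    refine withDensity_congr_ae (ae_of_all _ fun n => ?_)
    show F n = gaussianPDF 0 σ2 n * (F n / gaussianPDF 0 σ2 n)
    rw [ENNReal.mul_div_cancel (gaussianPDF_pos 0 hσ2.ne' n).ne'
      (by rw [gaussianPDF]; exact ENNReal.ofReal_ne_top)]
  have hacg : μ.map N ≪ gaussianReal 0 σ2 := hμNW2 ▸ withDensity_absolutelyContinuous _ _
  have hrn2 : (μ.map N).rnDeriv (gaussianReal 0 σ2) =ᵐ[μ.map N] W2 :=
    rnDeriv_ae_eq_of_eq_withDensity hW2m hμNW2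
  have hlogW2 : (fun n => Real.log (W2 n).toReal) =ᵐ[μ.map N]
      fun n => Real.log (F n).toReal - Real.log (gaussianPDFReal 0 σ2 n) := by
    filter_upwards [hFgood] with n hf
    simp only [hW2def, gaussianPDF]
    rw [ENNReal.toReal_div, ENNReal.toReal_ofReal (gaussianPDFReal_nonneg 0 σ2 n),
      Real.log_div (ENNReal.toReal_pos hf.1.ne' hf.2).ne'
        (gaussianPDFReal_pos 0 σ2 n hσ2.ne').ne']
  have hsqm : Measurable fun y : ℝ => y ^ 2 := measurable_id.pow_const 2
  have hN2 : Integrable (fun n : ℝ => n ^ 2) (μ.map N) :=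
    (integrable_map_measure hsqm.aestronglyMeasurable
      hN.aemeasurable).mpr hNL2.integrable_sq
  have hm2N : ∫ n, n ^ 2 ∂(μ.map N) = (σ2 : ℝ) := by
    rw [integral_map hN.aemeasurable hsqm.aestronglyMeasurable]
    have hv := variance_eq_sub hNL2
    rw [hNvar] at hv
    have h0 : μ[N] = 0 := hNmean
    simp only [Pi.pow_apply] at hv
    rw [h0] at hv
    simp at hv
    linarith [hv]
  have hiφN : Integrable (fun n => Real.log (gaussianPDFReal 0 σ2 n)) (μ.map N) := by
    simp only [log_gaussianPDFReal hσ2.ne']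
    exact (integrable_const _).sub (hN2.div_const _)
  have hiW2 : Integrable (fun n => Real.log (W2 n).toReal) (μ.map N) :=
    (hiF.sub hiφN).congr hlogW2.symm
  have hσR : (0 : ℝ) < (σ2 : ℝ) := by exact_mod_cast hσ2
  have hIφval : ∫ n, Real.log (gaussianPDFReal 0 σ2 n) ∂(μ.map N)
      = -(Real.log (2 * π * σ2) / 2) - 1 / 2 := by
    simp only [log_gaussianPDFReal hσ2.ne']
    rw [integral_sub (integrable_const _) (hN2.div_const _), integral_const, probReal_univ,
      integral_div, hm2N]
    have hne : (σ2 : ℝ) ≠ 0 := hσR.ne'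
    field_simp
    ring
  have hklN : klDiv (μ.map N) (gaussianReal 0 σ2)
      = ((∫ n, Real.log (F n).toReal ∂(μ.map N)
          + (Real.log (2 * π * σ2) / 2 + 1 / 2) : ℝ) : EReal) := by
    rw [klDiv_eq_of hacg hrn2 hiW2]
    congr 1
    rw [integral_congr_ae hlogW2, integral_sub hiF hiφN, hIφval]
    ring
  -- Gibbs bound with the Gaussian of variance E + σ2
  have hs0 : E + σ2 ≠ 0 := by positivity
  have hsR : (0 : ℝ) < ((E + σ2 : ℝ≥0) : ℝ) := by
    have : (0 : ℝ≥0) < E + σ2 := pos_iff_ne_zero.mpr hs0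
    exact_mod_cast this
  have hY2 : Integrable (fun y : ℝ => y ^ 2) (μ.map Y) := by
    refine (integrable_map_measure hsqm.aestronglyMeasurable
      hYm.aemeasurable).mpr ?_
    exact (hXL2.add hNL2).integrable_sq
  have hm2Y : ∫ y, y ^ 2 ∂(μ.map Y) ≤ ((E + σ2 : ℝ≥0) : ℝ) := by
    rw [integral_map hYm.aemeasurable hsqm.aestronglyMeasurable]
    have hvadd : variance (X + N) μ = variance X μ + variance N μ :=
      IndepFun.variance_add hXL2 hNL2 hXN
    have hvd := variance_eq_sub (hXL2.add hNL2)
    have hmean : μ[X + N] = 0 := by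
      have h' : (∫ ω, (X ω + N ω) ∂μ) = 0 := by
        rw [integral_add hXint hNint, hXmean, hNmean, add_zero]
      simpa [Pi.add_apply] using h'
    have heq : ∫ ω, Y ω ^ 2 ∂μ = variance (X + N) μ := by
      rw [hvd, hmean]
      norm_num
      rfl
    rw [heq, hvadd]
    push_cast
    linarith [hXvar, hNvar.le]
  have hψm : Measurable (gaussianPDFReal 0 (E + σ2)) := measurable_gaussianPDFReal 0 (E + σ2)
  have hψpos : ∀ x, 0 < gaussianPDFReal 0 (E + σ2) x :=
    fun x => gaussianPDFReal_pos 0 (E + σ2) x hs0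
  have hψ1 : ∫⁻ x, ENNReal.ofReal (gaussianPDFReal 0 (E + σ2) x) ∂(volume : Measure ℝ) ≤ 1 :=
    le_of_eq (lintegral_gaussianPDF_eq_one 0 hs0)
  have hiψ : Integrable (fun y => Real.log (gaussianPDFReal 0 (E + σ2) y)) (μ.map Y) := by
    simp only [log_gaussianPDFReal hs0]
    exact (integrable_const _).sub (hY2.div_const _)
  have hgibbs : ∫ y, Real.log (gaussianPDFReal 0 (E + σ2) y) ∂(μ.map Y)
      ≤ ∫ y, Real.log (H y).toReal ∂(μ.map Y) :=
    gibbs_aux (μ.map Y) hHm hYeq hψm hψpos hψ1 hiH hiψ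
  have hIψ : ∫ y, Real.log (gaussianPDFReal 0 (E + σ2) y) ∂(μ.map Y)
      = -(Real.log (2 * π * ((E + σ2 : ℝ≥0) : ℝ)) / 2)
        - (∫ y, y ^ 2 ∂(μ.map Y)) / (2 * ((E + σ2 : ℝ≥0) : ℝ)) := by
    simp only [log_gaussianPDFReal hs0]
    rw [integral_sub (integrable_const _) (hY2.div_const _), integral_const, probReal_univ,
      integral_div]
    simp
  -- final arithmetic
  rw [show mutualInfo μ X Y = klDiv J ((μ.map X).prod (μ.map Y)) from rfl, hklJ, hklN,
    ← EReal.coe_add, EReal.coe_le_coe_iff]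
  have h3 : Real.log (2 * π * ((E + σ2 : ℝ≥0) : ℝ))
      = Real.log (1 + (E : ℝ) / (σ2 : ℝ)) + Real.log (2 * π * σ2) := by
    rw [← Real.log_mul (by positivity) (by positivity)]
    congr 1
    have hcast : ((E + σ2 : ℝ≥0) : ℝ) = (E : ℝ) + (σ2 : ℝ) := by push_cast; ring
    rw [hcast]
    field_simp
    ring
  have h2 : (∫ y, y ^ 2 ∂(μ.map Y)) / (2 * ((E + σ2 : ℝ≥0) : ℝ)) ≤ 1 / 2 := by
    rw [div_le_div_iff₀ (by positivity) (by norm_num)]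
    nlinarith [hm2Y, hsR]
  linarith [hgibbs, hIψ.le, hIψ.ge]
end
end

section
/- Fix E > 0 and σ² > 0. Let N be a zero-mean real random variable with probability density, variance σ², and finite differential entropy, and let N_G ∼ N(0, σ²). Define the capacity of the additive-noise channel with noise N under input variance constraint E as C = sup I(X ; X + N), the supremum running over all real random variables X with a probability density, independent of N, with Var(X) ≤ E. Then C ≤ ½·log(1 + E/σ²) + D(P_N ‖ P_{N_G}); that is, the capacity of the non-Gaussian channel exceeds the Gaussian-equivalent capacity by at most the non-Gaussianity of the noise. -/
open MeasureTheory ProbabilityTheory Real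
open scoped NNReal ENNReal Classical

noncomputable section

namespace Stmt9Aux

variable {α β : Type*} [MeasurableSpace α] [MeasurableSpace β]

lemma sub_one_le_mul_log {a : ℝ} (ha : 0 ≤ a) : a - 1 ≤ a * Real.log a := by
  rcases eq_or_lt_of_le ha with h | h
  · simp [← h]
  · have h1 : Real.log a⁻¹ ≤ a⁻¹ - 1 := Real.log_le_sub_one_of_pos (by positivity)
    rw [Real.log_inv] at h1
    nlinarith [mul_le_mul_of_nonneg_left h1 ha, mul_inv_cancel₀ h.ne']

lemma integral_withDensity_toReal {μ : Measure α} {f : α → ℝ≥0∞} (hf : Measurable f)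
    (hfin : ∀ᵐ x ∂μ, f x < ∞) (g : α → ℝ) :
    ∫ x, g x ∂(μ.withDensity f) = ∫ x, g x * (f x).toReal ∂μ := by
  have h1 : μ.withDensity f = μ.withDensity (fun x => ((f x).toNNReal : ℝ≥0∞)) := by
    apply withDensity_congr_ae
    filter_upwards [hfin] with x hx
    rw [ENNReal.coe_toNNReal hx.ne]
  rw [h1, integral_withDensity_eq_integral_smul hf.ennreal_toNNReal]
  congr 1 with x
  rw [NNReal.smul_def, smul_eq_mul, mul_comm]
  simp [ENNReal.coe_toNNReal_eq_toReal]

lemma prod_withDensity (P : Measure α) (ν : Measure β) [SFinite P] [SFinite ν]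
    {f : β → ℝ≥0∞} (hf : Measurable f) :
    P.prod (ν.withDensity f) = (P.prod ν).withDensity (fun z => f z.2) := by
  ext s hs
  rw [Measure.prod_apply hs, withDensity_apply _ hs, ← lintegral_indicator hs _,
    lintegral_prod (s.indicator fun z => f z.2)
      (((hf.comp measurable_snd).indicator hs).aemeasurable)]
  congr 1 with x
  rw [withDensity_apply _ (measurable_prodMk_left hs), ← lintegral_indicator (measurable_prodMk_left hs) _]
  refine lintegral_congr fun y => ?_
  classical
  simp only [Set.indicator, Set.mem_preimage]


end Stmt9Aux

namespace Stmt9Aux2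

open Stmt9Aux

variable {α β : Type*} [MeasurableSpace α] [MeasurableSpace β]

/-- Golden formula / data processing: the KL divergence of `μ` from the product of `P` and
the second marginal of `μ` is at most `∫ llr μ (P.prod Q') ∂μ` for any reference probability
measure `Q'`. -/
lemma klDiv_le_integral_llr_prod (P : Measure α) (Q' : Measure β)
    [IsProbabilityMeasure P] [IsProbabilityMeasure Q']
    (μ : Measure (α × β)) [IsProbabilityMeasure μ]
    (hac : μ ≪ P.prod Q') (hint : Integrable (llr μ (P.prod Q')) μ) :
    klDiv μ (P.prod (μ.map Prod.snd)) ≤ ((∫ z, llr μ (P.prod Q') z ∂μ : ℝ) : EReal) := by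
  unfold klDiv
  set ξ : Measure (α × β) := P.prod Q' with hξ
  set w : α × β → ℝ≥0∞ := μ.rnDeriv ξ with hw
  have hw_meas : Measurable w := Measure.measurable_rnDeriv _ _
  have hμ_eq : ξ.withDensity w = μ := Measure.withDensity_rnDeriv_eq _ _ hac
  set h : β → ℝ≥0∞ := fun y => ∫⁻ x, w (x, y) ∂P with hh
  have hh_meas : Measurable h := hw_meas.lintegral_prod_left'
  -- the second marginal of μ
  have hμY : μ.map Prod.snd = Q'.withDensity h := by
    ext s hs
    rw [Measure.map_apply measurable_snd hs, ← hμ_eq,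
      withDensity_apply _ (measurable_snd hs), withDensity_apply _ hs,
      ← lintegral_indicator (measurable_snd hs) _,
      lintegral_prod_symm _ ((hw_meas.indicator (measurable_snd hs)).aemeasurable),
      ← lintegral_indicator hs _]
    refine lintegral_congr fun y => ?_
    classical
    by_cases hy : y ∈ s
    · simp only [Set.indicator, Set.mem_preimage, hy, if_true]
      rfl
    · simp only [Set.indicator, Set.mem_preimage, hy, if_false]
      simp
  have hlint_h : ∫⁻ y, h y ∂Q' = 1 := by
    have : (Q'.withDensity h) Set.univ = 1 := by
      rw [← hμY]
      haveI : IsProbabilityMeasure (μ.map Prod.snd) :=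
        Measure.isProbabilityMeasure_map measurable_snd.aemeasurable
      exact measure_univ
    rwa [withDensity_apply _ MeasurableSet.univ, setLIntegral_univ] at this
  have hh_fin : ∀ᵐ y ∂Q', h y < ∞ :=
    ae_lt_top hh_meas (by rw [hlint_h]; exact ENNReal.one_ne_top)
  -- w vanishes a.e. on the set where h ∘ snd vanishes
  have hs0_meas : MeasurableSet {z : α × β | h z.2 = 0} :=
    (hh_meas.comp measurable_snd) (measurableSet_singleton 0)
  have hμs0 : μ {z : α × β | h z.2 = 0} = 0 := by
    rw [← hμ_eq, withDensity_apply _ hs0_meas, ← lintegral_indicator hs0_meas _,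
      lintegral_prod_symm _ ((hw_meas.indicator hs0_meas).aemeasurable)]
    have : ∀ y : β, ∫⁻ x, ({z : α × β | h z.2 = 0}.indicator w) (x, y) ∂P
        = {y : β | h y = 0}.indicator h y := by
      intro y
      classical
      by_cases hy : h y = 0
      · simp only [Set.indicator, Set.mem_setOf_eq, hy, if_true]
        exact hy
      · simp only [Set.indicator, Set.mem_setOf_eq, hy, if_false]
        simp [hy]
    rw [lintegral_congr this]
    have h0 : ∀ y : β, ({y : β | h y = 0}.indicator h) y = 0 := by
      intro y
      classical
      by_cases hy : h y = 0 <;> simp [Set.indicator, hy]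
    rw [lintegral_congr h0, lintegral_zero]
  -- a.e. facts
  have hs0ae : ∀ᵐ z ∂μ, h z.2 ≠ 0 := by
    rw [ae_iff]; simp only [ne_eq, not_not]; exact hμs0
  have hs0aeξ : ∀ᵐ z ∂ξ, h z.2 = 0 → w z = 0 := by
    have h1 : ∫⁻ z in {z : α × β | h z.2 = 0}, w z ∂ξ = 0 := by
      rw [← withDensity_apply _ hs0_meas, hμ_eq]; exact hμs0
    have h2 := (setLIntegral_eq_zero_iff hs0_meas hw_meas).mp h1
    exact h2
  have hw_fin_ξ : ∀ᵐ z ∂ξ, w z < ∞ := Measure.rnDeriv_lt_top μ ξ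
  have hhfinξ : ∀ᵐ z ∂ξ, h z.2 < ∞ := by
    have hNm : MeasurableSet {y : β | ¬ h y < ∞} := by
      simp only [not_lt, top_le_iff]
      exact hh_meas (measurableSet_singleton ⊤)
    have hN : Q' {y : β | ¬ h y < ∞} = 0 := by
      rw [← ae_iff] at *; exact hh_fin
    rw [ae_iff]
    have : {z : α × β | ¬ h z.2 < ∞} = Prod.snd ⁻¹' {y : β | ¬ h y < ∞} := rfl
    rw [this, hξ, ← Measure.map_apply measurable_snd hNm, Measure.map_snd_prod, measure_univ,
      one_smul, hN]
  set φ : α × β → ℝ≥0∞ := fun z => w z / h z.2 with hφ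
  have hφ_meas : Measurable φ := hw_meas.div (hh_meas.comp measurable_snd)
  have hcongr : (fun z : α × β => h z.2) * φ =ᵐ[ξ] w := by
    filter_upwards [hs0aeξ, hhfinξ] with z hz1 hz2
    by_cases h0 : h z.2 = 0
    · simp [Pi.mul_apply, hφ, h0, hz1 h0]
    · exact ENNReal.mul_div_cancel h0 hz2.ne
  -- the product reference measure with the true marginal
  set ν : Measure (α × β) := P.prod (μ.map Prod.snd) with hν
  haveI : IsProbabilityMeasure (μ.map Prod.snd) :=
    Measure.isProbabilityMeasure_map measurable_snd.aemeasurable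
  haveI : IsProbabilityMeasure ν := by rw [hν]; infer_instance
  have hν_eq : ν = ξ.withDensity (fun z => h z.2) := by
    rw [hν, hμY, hξ]; exact prod_withDensity P Q' hh_meas
  have hμν : μ = ν.withDensity φ := by
    rw [hν_eq, ← withDensity_mul ξ
      (show Measurable fun z : α × β => h z.2 from hh_meas.comp measurable_snd) hφ_meas,
      withDensity_congr_ae hcongr, hμ_eq]
  have hacν : μ ≪ ν := by rw [hμν]; exact withDensity_absolutelyContinuous ν φ
  have hrnν : μ.rnDeriv ν =ᵐ[ν] φ := by
    have := Measure.rnDeriv_withDensity ν hφ_meas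
    rw [← hμν] at this; exact this
  have hrnμ : μ.rnDeriv ν =ᵐ[μ] φ := hrnν.filter_mono hacν.ae_le
  have hwposμ : ∀ᵐ z ∂μ, 0 < w z := Measure.rnDeriv_pos hac
  have hwfinμ : ∀ᵐ z ∂μ, w z < ∞ := hw_fin_ξ.filter_mono hac.ae_le
  have hhfinμ : ∀ᵐ z ∂μ, h z.2 < ∞ := hhfinξ.filter_mono hac.ae_le
  have hllr : (fun z => Real.log (μ.rnDeriv ν z).toReal)
      =ᵐ[μ] fun z => Real.log (w z).toReal - Real.log (h z.2).toReal := by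
    filter_upwards [hrnμ, hwposμ, hwfinμ, hs0ae, hhfinμ] with z h1 h2 h3 h4 h5
    rw [h1]
    show Real.log (w z / h z.2).toReal = _
    rw [ENNReal.toReal_div,
      Real.log_div (ENNReal.toReal_ne_zero.mpr ⟨h2.ne', h3.ne⟩)
        (ENNReal.toReal_ne_zero.mpr ⟨h4, h5.ne⟩)]
  -- the density-weighted log-density is integrable over ξ
  set F : α × β → ℝ := fun z => Real.log (w z).toReal * (w z).toReal with hF
  have hFint : Integrable F ξ := by
    have h1 : Integrable (llr μ ξ) (ξ.withDensity w) := by rw [hμ_eq]; exact hint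
    exact (integrable_withDensity_iff hw_meas (Measure.rnDeriv_lt_top μ ξ)).mp h1
  have hFeq : ∫ z, llr μ ξ z ∂μ = ∫ z, F z ∂ξ := by
    have h1 : ∫ z, llr μ ξ z ∂(ξ.withDensity w) = ∫ z, llr μ ξ z * (w z).toReal ∂ξ :=
      integral_withDensity_toReal hw_meas (Measure.rnDeriv_lt_top μ ξ) (llr μ ξ)
    rw [hμ_eq] at h1
    exact h1
  set G : β → ℝ := fun y => ∫ x, F (x, y) ∂P with hG
  have hGint : Integrable G Q' := hFint.integral_prod_right
  -- pointwise Jensen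
  have hJ : ∀ᵐ y ∂Q', (h y).toReal * Real.log (h y).toReal ≤ G y := by
    filter_upwards [hh_fin, hFint.prod_left_ae] with y hy hFy
    set Wy : α → ℝ := fun x => (w (x, y)).toReal with hWy
    have hsec_meas : Measurable fun x => w (x, y) :=
      hw_meas.comp (measurable_id.prodMk measurable_const)
    have hWy_fin : ∀ᵐ x ∂P, w (x, y) < ∞ := ae_lt_top hsec_meas hy.ne
    have hWy_int : Integrable Wy P :=
      integrable_toReal_of_lintegral_ne_top hsec_meas.aemeasurable hy.ne
    have hintWy : ∫ x, Wy x ∂P = (h y).toReal :=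
      integral_toReal hsec_meas.aemeasurable hWy_fin
    have hgi : Integrable (fun x => Wy x * Real.log (Wy x)) P :=
      hFy.congr (Filter.Eventually.of_forall fun x => (mul_comm _ _))
    have hjen := Real.convexOn_mul_log.map_integral_le
      Real.continuous_mul_log.continuousOn isClosed_Ici
      (Filter.Eventually.of_forall fun x => ENNReal.toReal_nonneg) hWy_int hgi
    rw [hintWy] at hjen
    calc (h y).toReal * Real.log (h y).toReal ≤ ∫ x, Wy x * Real.log (Wy x) ∂P := hjen
      _ = G y := integral_congr_ae (Filter.Eventually.of_forall fun x => (mul_comm _ _))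
  set ψ : β → ℝ := fun y => (h y).toReal * Real.log (h y).toReal with hψ
  have hψmeas : AEStronglyMeasurable ψ Q' :=
    (hh_meas.ennreal_toReal.mul (Real.measurable_log.comp hh_meas.ennreal_toReal)).aestronglyMeasurable
  have hψint : Integrable ψ Q' := by
    refine Integrable.mono' (hGint.abs.add (integrable_const 1)) hψmeas ?_
    filter_upwards [hJ] with y hy
    simp only [Pi.add_apply, Real.norm_eq_abs]
    rw [abs_le]
    have h0 : (0:ℝ) ≤ (h y).toReal := ENNReal.toReal_nonneg
    have h1 : (h y).toReal - 1 ≤ ψ y := sub_one_le_mul_log h0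
    have hy' : ψ y ≤ G y := hy
    constructor
    · have := abs_nonneg (G y); linarith
    · have := le_abs_self (G y); linarith
  have hf_int : Integrable (fun y => (h y).toReal) Q' :=
    integrable_toReal_of_lintegral_ne_top hh_meas.aemeasurable (by rw [hlint_h]; exact ENNReal.one_ne_top)
  have hint1 : ∫ y, (h y).toReal ∂Q' = 1 := by
    rw [integral_toReal hh_meas.aemeasurable hh_fin, hlint_h]; rfl
  have hGibbs : 0 ≤ ∫ y, ψ y ∂Q' := by
    have hjen := Real.convexOn_mul_log.map_integral_le
      Real.continuous_mul_log.continuousOn isClosed_Ici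
      (Filter.Eventually.of_forall fun y => ENNReal.toReal_nonneg) hf_int hψint
    rw [hint1] at hjen
    simpa using hjen
  set t : β → ℝ := fun y => Real.log (h y).toReal with ht
  have ht_meas : Measurable t := Real.measurable_log.comp hh_meas.ennreal_toReal
  have htint : Integrable t (μ.map Prod.snd) := by
    rw [hμY]
    exact (integrable_withDensity_iff hh_meas hh_fin).mpr
      (hψint.congr (Filter.Eventually.of_forall fun y => (mul_comm _ _)))
  have htmu : Integrable (fun z : α × β => t z.2) μ :=
    (integrable_map_measure ht_meas.aestronglyMeasurable measurable_snd.aemeasurable).mp htint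
  have hteq : ∫ z : α × β, t z.2 ∂μ = ∫ y, ψ y ∂Q' := by
    rw [← integral_map measurable_snd.aemeasurable ht_meas.aestronglyMeasurable, hμY,
      integral_withDensity_toReal hh_meas hh_fin t]
    exact integral_congr_ae (Filter.Eventually.of_forall fun y => (mul_comm _ _))
  have hllr_int : Integrable (fun z => Real.log (μ.rnDeriv ν z).toReal) μ :=
    Integrable.congr (hint.sub htmu) hllr.symm
  have key : ∫ z, Real.log (μ.rnDeriv ν z).toReal ∂μ ≤ ∫ z, llr μ ξ z ∂μ := by
    rw [integral_congr_ae hllr]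
    have hsub := integral_sub (μ := μ) (f := fun z : α × β => Real.log (w z).toReal)
      (g := fun z : α × β => Real.log (h z.2).toReal) hint htmu
    rw [hsub]
    have h0 : 0 ≤ ∫ z : α × β, Real.log (h z.2).toReal ∂μ := by
      have := hGibbs
      rw [← hteq] at this
      exact this
    have heq : ∫ z, llr μ ξ z ∂μ = ∫ z : α × β, Real.log (w z).toReal ∂μ := rfl
    rw [heq]
    linarith
  rw [if_pos ⟨hacν, hllr_int⟩]
  exact EReal.coe_le_coe_iff.mpr key


lemma integrable_comp_fst {α β : Type*} [MeasurableSpace α] [MeasurableSpace β]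
    {P : Measure α} {Q : Measure β} [IsProbabilityMeasure P] [IsProbabilityMeasure Q]
    {f : α → ℝ} (hf : Integrable f P) : Integrable (fun p : α × β => f p.1) (P.prod Q) := by
  have hmap : (P.prod Q).map Prod.fst = P := by
    rw [Measure.map_fst_prod, measure_univ, one_smul]
  rw [← hmap] at hf
  exact (integrable_map_measure hf.aestronglyMeasurable measurable_fst.aemeasurable).mp hf

lemma integrable_comp_snd {α β : Type*} [MeasurableSpace α] [MeasurableSpace β]
    {P : Measure α} {Q : Measure β} [IsProbabilityMeasure P] [IsProbabilityMeasure Q]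
    {f : β → ℝ} (hf : Integrable f Q) : Integrable (fun p : α × β => f p.2) (P.prod Q) := by
  have hmap : (P.prod Q).map Prod.snd = Q := by
    rw [Measure.map_snd_prod, measure_univ, one_smul]
  rw [← hmap] at hf
  exact (integrable_map_measure hf.aestronglyMeasurable measurable_snd.aemeasurable).mp hf

lemma integral_comp_fst {α β : Type*} [MeasurableSpace α] [MeasurableSpace β]
    {P : Measure α} {Q : Measure β} [IsProbabilityMeasure P] [IsProbabilityMeasure Q]
    {f : α → ℝ} (hf : AEStronglyMeasurable f P) :
    ∫ p : α × β, f p.1 ∂(P.prod Q) = ∫ x, f x ∂P := by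
  have hmap : (P.prod Q).map Prod.fst = P := by
    rw [Measure.map_fst_prod, measure_univ, one_smul]
  rw [← hmap] at hf
  conv_rhs => rw [← hmap]
  exact (integral_map measurable_fst.aemeasurable hf).symm

lemma integral_comp_snd {α β : Type*} [MeasurableSpace α] [MeasurableSpace β]
    {P : Measure α} {Q : Measure β} [IsProbabilityMeasure P] [IsProbabilityMeasure Q]
    {f : β → ℝ} (hf : AEStronglyMeasurable f Q) :
    ∫ p : α × β, f p.2 ∂(P.prod Q) = ∫ y, f y ∂Q := by
  have hmap : (P.prod Q).map Prod.snd = Q := by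
    rw [Measure.map_snd_prod, measure_univ, one_smul]
  rw [← hmap] at hf
  conv_rhs => rw [← hmap]
  exact (integral_map measurable_snd.aemeasurable hf).symm

lemma log_gaussianPDFReal (m : ℝ) (v : ℝ≥0) (hv : v ≠ 0) (x : ℝ) :
    Real.log (gaussianPDFReal m v x)
      = -(x - m)^2 / (2*(v:ℝ)) - Real.log (Real.sqrt (2*π*(v:ℝ))) := by
  have hvpos : (0:ℝ) < (v:ℝ) := by
    have : 0 < v := pos_iff_ne_zero.mpr hv
    exact_mod_cast this
  have hs : (0:ℝ) < Real.sqrt (2*π*(v:ℝ)) := Real.sqrt_pos.mpr (by positivity)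
  have hdef : gaussianPDFReal m v x
      = (Real.sqrt (2*π*(v:ℝ)))⁻¹ * Real.exp (-(x - m)^2/(2*(v:ℝ))) := by
    rw [gaussianPDFReal_def]
  rw [hdef, Real.log_mul (inv_ne_zero hs.ne') (Real.exp_ne_zero _), Real.log_inv, Real.log_exp]
  ring

lemma map_add_eq_withDensity (P Q : Measure ℝ) [IsProbabilityMeasure P] [IsProbabilityMeasure Q]
    (hQac : Q ≪ volume) :
    (P.prod Q).map (fun p : ℝ × ℝ => (p.1, p.1 + p.2)) =
      (P.prod (volume : Measure ℝ)).withDensity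
        (fun z => Q.rnDeriv volume (z.2 - z.1)) := by
  set q := Q.rnDeriv volume with hq
  have hq_meas : Measurable q := Measure.measurable_rnDeriv _ _
  have hT_meas : Measurable fun p : ℝ × ℝ => (p.1, p.1 + p.2) :=
    measurable_fst.prodMk (measurable_fst.add measurable_snd)
  have hd_meas : Measurable fun z : ℝ × ℝ => q (z.2 - z.1) :=
    hq_meas.comp (measurable_snd.sub measurable_fst)
  ext s hs
  rw [Measure.map_apply hT_meas hs, Measure.prod_apply (hT_meas hs),
    withDensity_apply _ hs, ← lintegral_indicator hs _,
    lintegral_prod (s.indicator fun z => q (z.2 - z.1)) ((hd_meas.indicator hs).aemeasurable)]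
  refine lintegral_congr fun x => ?_
  have hsec : MeasurableSet (Prod.mk x ⁻¹' ((fun p : ℝ × ℝ => (p.1, p.1 + p.2)) ⁻¹' s)) :=
    measurable_prodMk_left (hT_meas hs)
  conv_lhs => rw [← Measure.withDensity_rnDeriv_eq Q volume hQac]
  rw [withDensity_apply _ hsec, ← lintegral_indicator hsec _,
    ← lintegral_sub_right_eq_self
      (fun n => (Prod.mk x ⁻¹' ((fun p : ℝ × ℝ => (p.1, p.1 + p.2)) ⁻¹' s)).indicator q n) x]
  refine lintegral_congr fun y => ?_
  classical
  simp only [Set.indicator, Set.mem_preimage, add_sub_cancel]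

end Stmt9Aux2



namespace Stmt9Main

open Stmt9Aux Stmt9Aux2

lemma rate_le (E σ2 : ℝ≥0) (hσ2 : 0 < σ2)
    (Q : Measure ℝ) [IsProbabilityMeasure Q] (hQac : Q ≪ volume)
    (hQint : Integrable (fun x => x) Q) (hQmean : ∫ x, x ∂Q = 0)
    (hQL2 : MemLp (fun x => x) 2 Q) (hQvar : variance (fun x => x) Q = (σ2 : ℝ))
    (hQG : Q ≪ gaussianReal 0 σ2) (hQGint : Integrable (llr Q (gaussianReal 0 σ2)) Q)
    (P : Measure ℝ) [IsProbabilityMeasure P] (hP2 : MemLp (fun x => x) 2 P)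
    (hPvar : variance (fun x => x) P ≤ (E : ℝ)) :
    rate P Q ≤ ((Real.log (1 + (E : ℝ) / (σ2 : ℝ)) / 2
      + ∫ x, llr Q (gaussianReal 0 σ2) x ∂Q : ℝ) : EReal) := by
  have hσ2R : (0:ℝ) < (σ2:ℝ) := by exact_mod_cast hσ2
  set G : Measure ℝ := gaussianReal 0 σ2 with hG
  set d : ℝ := ∫ x, llr Q G x ∂Q with hd
  set m : ℝ := ∫ x, x ∂P with hm
  set τ2 : ℝ≥0 := E + σ2 with hτ2
  have hτ2pos : 0 < τ2 := lt_of_lt_of_le hσ2 le_add_self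
  have hτ2ne : τ2 ≠ 0 := hτ2pos.ne'
  have hτ2coe : (τ2:ℝ) = (E:ℝ) + (σ2:ℝ) := by rw [hτ2]; exact NNReal.coe_add E σ2
  have hτ2R : (0:ℝ) < (τ2:ℝ) := by exact_mod_cast hτ2pos
  set G' : Measure ℝ := gaussianReal m τ2 with hG'
  -- unfold rate
  have hfst : ((P.prod Q).map (fun p : ℝ × ℝ => p.1)) = P := by
    rw [show (fun p : ℝ × ℝ => p.1) = Prod.fst from rfl, Measure.map_fst_prod, measure_univ,
      one_smul]
  have hrate0 : rate P Q = klDiv ((P.prod Q).map (fun p : ℝ × ℝ => (p.1, p.1 + p.2)))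
      (P.prod ((P.prod Q).map (fun p : ℝ × ℝ => p.1 + p.2))) := by
    show klDiv ((P.prod Q).map (fun p : ℝ × ℝ => (p.1, p.1 + p.2)))
      (((P.prod Q).map (fun p : ℝ × ℝ => p.1)).prod
        ((P.prod Q).map (fun p : ℝ × ℝ => p.1 + p.2))) = _
    rw [hfst]
  set T : ℝ × ℝ → ℝ × ℝ := fun p => (p.1, p.1 + p.2) with hT
  have hT_meas : Measurable T := measurable_fst.prodMk (measurable_fst.add measurable_snd)
  set μ : Measure (ℝ × ℝ) := (P.prod Q).map T with hμ
  haveI : IsProbabilityMeasure μ := Measure.isProbabilityMeasure_map hT_meas.aemeasurable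
  have hsnd_marg : μ.map Prod.snd = (P.prod Q).map (fun p : ℝ × ℝ => p.1 + p.2) := by
    rw [hμ, Measure.map_map measurable_snd hT_meas]
    rfl
  rw [← hsnd_marg] at hrate0
  -- density representation of μ
  set q : ℝ → ℝ≥0∞ := Q.rnDeriv volume with hq
  have hq_meas : Measurable q := Measure.measurable_rnDeriv _ _
  have hμ_dens : μ = (P.prod (volume : Measure ℝ)).withDensity (fun z => q (z.2 - z.1)) :=
    map_add_eq_withDensity P Q hQac
  have hG'_dens : G' = (volume : Measure ℝ).withDensity (gaussianPDF m τ2) :=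
    gaussianReal_of_var_ne_zero m hτ2ne
  have hν'_eq : P.prod G' = (P.prod (volume : Measure ℝ)).withDensity
      (fun z => gaussianPDF m τ2 z.2) := by
    rw [hG'_dens]
    exact prod_withDensity P volume (measurable_gaussianPDF m τ2)
  set φA : ℝ × ℝ → ℝ≥0∞ := fun z => q (z.2 - z.1) / gaussianPDF m τ2 z.2 with hφA
  have hd_meas : Measurable fun z : ℝ × ℝ => q (z.2 - z.1) :=
    hq_meas.comp (measurable_snd.sub measurable_fst)
  have hφA_meas : Measurable φA :=
    hd_meas.div ((measurable_gaussianPDF m τ2).comp measurable_snd)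
  have hgne_top : ∀ y : ℝ, gaussianPDF m τ2 y ≠ ⊤ := fun y => ENNReal.ofReal_ne_top
  have hcanc : (fun z : ℝ × ℝ => gaussianPDF m τ2 z.2) * φA = fun z => q (z.2 - z.1) := by
    funext z
    exact ENNReal.mul_div_cancel (gaussianPDF_pos m hτ2ne z.2).ne' (hgne_top z.2)
  haveI : IsProbabilityMeasure (P.prod G') := by infer_instance
  have hμν' : μ = (P.prod G').withDensity φA := by
    rw [hν'_eq, ← withDensity_mul (P.prod (volume : Measure ℝ))
      (show Measurable fun z : ℝ × ℝ => gaussianPDF m τ2 z.2 from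
        (measurable_gaussianPDF m τ2).comp measurable_snd) hφA_meas, hcanc, ← hμ_dens]
  have hacA : μ ≪ P.prod G' := by
    rw [hμν']; exact withDensity_absolutelyContinuous _ _
  have hrnA : μ.rnDeriv (P.prod G') =ᵐ[μ] φA := by
    have h1 := Measure.rnDeriv_withDensity (P.prod G') hφA_meas
    rw [← hμν'] at h1
    exact h1.filter_mono hacA.ae_le
  -- a.e. positivity and finiteness of the translated density
  have hqpos : ∀ᵐ z ∂μ, q (z.2 - z.1) ≠ 0 := by
    rw [ae_iff]
    simp only [ne_eq, not_not]
    have hms : MeasurableSet {z : ℝ × ℝ | q (z.2 - z.1) = 0} :=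
      hd_meas (measurableSet_singleton 0)
    rw [hμ_dens, withDensity_apply _ hms,
      setLIntegral_congr_fun hms (fun z hz => hz)]
    simp
  have hqfin : ∀ᵐ z ∂μ, q (z.2 - z.1) < ∞ := by
    have hNm : MeasurableSet {n : ℝ | ¬ q n < ∞} := by
      simp only [not_lt, top_le_iff]
      exact hq_meas (measurableSet_singleton ⊤)
    have hN : (volume : Measure ℝ) {n : ℝ | ¬ q n < ∞} = 0 := by
      rw [← ae_iff]; exact Measure.rnDeriv_lt_top Q volume
    have hms : MeasurableSet {z : ℝ × ℝ | ¬ q (z.2 - z.1) < ∞} :=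
      (measurable_snd.sub measurable_fst) hNm
    have hξ'N : (P.prod (volume : Measure ℝ)) {z : ℝ × ℝ | ¬ q (z.2 - z.1) < ∞} = 0 := by
      rw [Measure.prod_apply hms]
      have hsec : ∀ x : ℝ, (volume : Measure ℝ)
          (Prod.mk x ⁻¹' {z : ℝ × ℝ | ¬ q (z.2 - z.1) < ∞}) = 0 := by
        intro x
        have hpre : Prod.mk x ⁻¹' {z : ℝ × ℝ | ¬ q (z.2 - z.1) < ∞}
            = (fun y : ℝ => y - x) ⁻¹' {n : ℝ | ¬ q n < ∞} := rfl
        rw [hpre, (measurePreserving_sub_right volume x).measure_preimage hNm.nullMeasurableSet]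
        exact hN
      rw [lintegral_congr hsec, lintegral_zero]
    have hacξ' : μ ≪ P.prod (volume : Measure ℝ) := by
      rw [hμ_dens]; exact withDensity_absolutelyContinuous _ _
    rw [ae_iff]
    exact hacξ' hξ'N
  -- explicit llr formula
  set C : ℝ × ℝ → ℝ :=
    fun z => Real.log (q (z.2 - z.1)).toReal - Real.log (gaussianPDFReal m τ2 z.2) with hC
  have hgtoReal : ∀ y : ℝ, (gaussianPDF m τ2 y).toReal = gaussianPDFReal m τ2 y := fun y =>
    ENNReal.toReal_ofReal (gaussianPDFReal_nonneg m τ2 y)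
  have hllrA : llr μ (P.prod G') =ᵐ[μ] C := by
    filter_upwards [hrnA, hqpos, hqfin] with z h1 h2 h3
    show Real.log (μ.rnDeriv (P.prod G') z).toReal = _
    rw [h1]
    show Real.log (q (z.2 - z.1) / gaussianPDF m τ2 z.2).toReal = _
    rw [ENNReal.toReal_div, hgtoReal,
      Real.log_div (ENNReal.toReal_ne_zero.mpr ⟨h2, h3.ne⟩)
        (gaussianPDFReal_pos m τ2 z.2 hτ2ne).ne']
  have hC_meas : Measurable C :=
    (Real.measurable_log.comp hd_meas.ennreal_toReal).sub
      (Real.measurable_log.comp ((measurable_gaussianPDFReal m τ2).comp measurable_snd))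
  -- pull back along T
  set B : ℝ × ℝ → ℝ :=
    fun p => Real.log (q p.2).toReal - Real.log (gaussianPDFReal m τ2 (p.1 + p.2)) with hB
  have hCToB : (fun p => C (T p)) = B := by
    funext p
    show Real.log (q (p.1 + p.2 - p.1)).toReal - _ = _
    rw [add_sub_cancel_left]
  -- a.e. decomposition of log q
  have hgtoReal0 : ∀ y : ℝ, (gaussianPDF 0 σ2 y).toReal = gaussianPDFReal 0 σ2 y := fun y =>
    ENNReal.toReal_ofReal (gaussianPDFReal_nonneg 0 σ2 y)
  have hchain : (fun n => Real.log (q n).toReal)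
      =ᵐ[Q] fun n => llr Q G n + Real.log (gaussianPDFReal 0 σ2 n) := by
    have h1 : Q.rnDeriv G * G.rnDeriv volume =ᵐ[volume] q := Measure.rnDeriv_mul_rnDeriv hQG
    have h2 : G.rnDeriv volume =ᵐ[volume] gaussianPDF 0 σ2 := rnDeriv_gaussianReal 0 σ2
    have h3 : ∀ᵐ n ∂Q, q n = Q.rnDeriv G n * gaussianPDF 0 σ2 n := by
      filter_upwards [hQac.ae_le h1, hQac.ae_le h2] with n e1 e2
      rw [← e1, Pi.mul_apply, e2]
    have h4 : ∀ᵐ n ∂Q, 0 < Q.rnDeriv G n := Measure.rnDeriv_pos hQG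
    have h5 : ∀ᵐ n ∂Q, Q.rnDeriv G n < ∞ := hQG.ae_le (Measure.rnDeriv_lt_top Q G)
    filter_upwards [h3, h4, h5] with n e3 e4 e5
    rw [e3, ENNReal.toReal_mul, hgtoReal0,
      Real.log_mul (ENNReal.toReal_ne_zero.mpr ⟨e4.ne', e5.ne⟩)
        (gaussianPDFReal_pos 0 σ2 n hσ2.ne').ne']
    rfl
  have hsnd_prod : (P.prod Q).map Prod.snd = Q := by
    rw [Measure.map_snd_prod, measure_univ, one_smul]
  have hlift : (fun p : ℝ × ℝ => Real.log (q p.2).toReal)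
      =ᵐ[P.prod Q] fun p => llr Q G p.2 + Real.log (gaussianPDFReal 0 σ2 p.2) := by
    have h1 : ∀ᵐ y ∂((P.prod Q).map Prod.snd),
        Real.log (q y).toReal = llr Q G y + Real.log (gaussianPDFReal 0 σ2 y) := by
      rw [hsnd_prod]; exact hchain
    exact ae_of_ae_map measurable_snd.aemeasurable h1
  set B' : ℝ × ℝ → ℝ := fun p => llr Q G p.2 + Real.log (gaussianPDFReal 0 σ2 p.2)
      - Real.log (gaussianPDFReal m τ2 (p.1 + p.2)) with hB'
  have hBB' : B =ᵐ[P.prod Q] B' := by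
    filter_upwards [hlift] with p hp
    show Real.log (q p.2).toReal - _ = _
    rw [hp]
  -- integrability over P.prod Q
  have hQx2 : Integrable (fun n : ℝ => n^2) Q := hQL2.integrable_sq
  have hPx2 : Integrable (fun x : ℝ => x^2) P := hP2.integrable_sq
  have hPx : Integrable (fun x : ℝ => x) P := hP2.integrable one_le_two
  have hint_llrQ : Integrable (fun p : ℝ × ℝ => llr Q G p.2) (P.prod Q) :=
    integrable_comp_snd hQGint
  have hfun0 : (fun n : ℝ => Real.log (gaussianPDFReal 0 σ2 n))
      = fun n => (-(1/(2*(σ2:ℝ)))) * n^2 - Real.log (Real.sqrt (2*π*(σ2:ℝ))) := by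
    funext n
    rw [log_gaussianPDFReal 0 σ2 hσ2.ne' n]
    ring
  have hintg0Q_int : Integrable (fun n : ℝ => Real.log (gaussianPDFReal 0 σ2 n)) Q := by
    rw [hfun0]
    exact (hQx2.const_mul _).sub (integrable_const _)
  have hint_g0 : Integrable (fun p : ℝ × ℝ => Real.log (gaussianPDFReal 0 σ2 p.2))
      (P.prod Q) := integrable_comp_snd hintg0Q_int
  have hsq_int : Integrable (fun p : ℝ × ℝ => (p.1 + p.2 - m)^2) (P.prod Q) := by
    have h1 : Integrable (fun p : ℝ × ℝ =>
        (p.1^2 - 2*m*p.1 + (p.2^2 - 2*m*p.2)) + (2*(p.1*p.2) + m^2)) (P.prod Q) := by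
      refine Integrable.add (Integrable.add ?_ ?_) (Integrable.add ?_ (integrable_const _))
      · exact integrable_comp_fst (f := fun x : ℝ => x^2 - 2*m*x)
          (hPx2.sub (hPx.const_mul (2*m)))
      · exact integrable_comp_snd (f := fun n : ℝ => n^2 - 2*m*n)
          (hQx2.sub (hQint.const_mul (2*m)))
      · exact (hPx.mul_prod hQint).const_mul 2
    exact h1.congr (Filter.Eventually.of_forall fun p => by ring)
  have hfun1 : (fun p : ℝ × ℝ => Real.log (gaussianPDFReal m τ2 (p.1 + p.2)))
      = fun p => (-(1/(2*(τ2:ℝ)))) * (p.1 + p.2 - m)^2 - Real.log (Real.sqrt (2*π*(τ2:ℝ))) := by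
    funext p
    rw [log_gaussianPDFReal m τ2 hτ2ne (p.1 + p.2)]
    ring
  have hint_g1 : Integrable (fun p : ℝ × ℝ => Real.log (gaussianPDFReal m τ2 (p.1 + p.2)))
      (P.prod Q) := by
    rw [hfun1]
    exact (hsq_int.const_mul _).sub (integrable_const _)
  have hB'int : Integrable B' (P.prod Q) := (hint_llrQ.add hint_g0).sub hint_g1
  have hBint : Integrable B (P.prod Q) := hB'int.congr hBB'.symm
  -- transport integrability and the integral to μ
  have hCμint : Integrable C μ := by
    rw [hμ, integrable_map_measure hC_meas.aestronglyMeasurable hT_meas.aemeasurable]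
    have : (C ∘ T) = B := hCToB
    rw [this]
    exact hBint
  have hllrμint : Integrable (llr μ (P.prod G')) μ := hCμint.congr hllrA.symm
  have hintCB : ∫ z, llr μ (P.prod G') z ∂μ = ∫ p, B p ∂(P.prod Q) := by
    rw [integral_congr_ae hllrA, hμ,
      integral_map hT_meas.aemeasurable hC_meas.aestronglyMeasurable]
    rw [show (fun p => C (T p)) = B from hCToB]
  -- moment identities
  have hQn2 : ∫ n, n^2 ∂Q = (σ2:ℝ) := by
    have hv := variance_eq_sub hQL2
    have h1 : Q[(fun x : ℝ => x)^2] = ∫ n, n^2 ∂Q := rfl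
    have h2 : Q[fun x : ℝ => x] = (0:ℝ) := hQmean
    rw [hQvar, h1, h2] at hv
    linarith
  have hPvar' : ∫ x, x^2 ∂P - m^2 ≤ (E:ℝ) := by
    have hv := variance_eq_sub hP2
    have h1 : P[(fun x : ℝ => x)^2] = ∫ x, x^2 ∂P := rfl
    have h2 : P[fun x : ℝ => x] = m := rfl
    rw [h1, h2] at hv
    rw [← hv]
    exact hPvar
  -- integral values
  have hintg0Q : ∫ n, Real.log (gaussianPDFReal 0 σ2 n) ∂Q
      = -(1:ℝ)/2 - Real.log (Real.sqrt (2*π*(σ2:ℝ))) := by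
    rw [hfun0, integral_sub (hQx2.const_mul _) (integrable_const _), integral_const_mul, hQn2,
      integral_const, probReal_univ]
    simp only [ENNReal.toReal_one, one_smul]
    field_simp
  have hprodmul : ∫ p : ℝ × ℝ, p.1 * p.2 ∂(P.prod Q) = (∫ x, x ∂P) * (∫ n, n ∂Q) :=
    integral_prod_mul (fun x : ℝ => x) (fun y : ℝ => y)
  have hsqval : ∫ p : ℝ × ℝ, (p.1 + p.2 - m)^2 ∂(P.prod Q)
      = ∫ x, x^2 ∂P - m^2 + (σ2:ℝ) := by
    have hexp : (fun p : ℝ × ℝ => (p.1 + p.2 - m)^2)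
        = fun p => (p.1^2 - 2*m*p.1 + (p.2^2 - 2*m*p.2)) + (2*(p.1*p.2) + m^2) := by
      funext p
      ring
    have hf1 : Integrable (fun p : ℝ × ℝ => p.1^2 - 2*m*p.1) (P.prod Q) :=
      integrable_comp_fst (f := fun x : ℝ => x^2 - 2*m*x) (hPx2.sub (hPx.const_mul (2*m)))
    have hf2 : Integrable (fun p : ℝ × ℝ => p.2^2 - 2*m*p.2) (P.prod Q) :=
      integrable_comp_snd (f := fun n : ℝ => n^2 - 2*m*n) (hQx2.sub (hQint.const_mul (2*m)))
    have hf3 : Integrable (fun p : ℝ × ℝ => 2*(p.1*p.2)) (P.prod Q) :=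
      (hPx.mul_prod hQint).const_mul 2
    have hf12 : Integrable (fun p : ℝ × ℝ => p.1^2 - 2*m*p.1 + (p.2^2 - 2*m*p.2)) (P.prod Q) :=
      hf1.add hf2
    have hf34 : Integrable (fun p : ℝ × ℝ => 2*(p.1*p.2) + m^2) (P.prod Q) :=
      hf3.add (integrable_const _)
    rw [hexp, integral_add hf12 hf34, integral_add hf1 hf2,
      integral_add hf3 (integrable_const _)]
    have hv1 : ∫ p : ℝ × ℝ, (p.1^2 - 2*m*p.1) ∂(P.prod Q) = ∫ x, x^2 ∂P - 2*m*m := by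
      rw [show (∫ p : ℝ × ℝ, (p.1^2 - 2*m*p.1) ∂(P.prod Q))
          = ∫ x, (x^2 - 2*m*x) ∂P from
        integral_comp_fst (f := fun x : ℝ => x^2 - 2*m*x)
          ((hPx2.sub (hPx.const_mul (2*m))).aestronglyMeasurable),
        integral_sub hPx2 (hPx.const_mul (2*m)), integral_const_mul, ← hm]
    have hv2 : ∫ p : ℝ × ℝ, (p.2^2 - 2*m*p.2) ∂(P.prod Q) = (σ2:ℝ) := by
      rw [show (∫ p : ℝ × ℝ, (p.2^2 - 2*m*p.2) ∂(P.prod Q))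
          = ∫ n, (n^2 - 2*m*n) ∂Q from
        integral_comp_snd (f := fun n : ℝ => n^2 - 2*m*n)
          ((hQx2.sub (hQint.const_mul (2*m))).aestronglyMeasurable),
        integral_sub hQx2 (hQint.const_mul (2*m)), integral_const_mul, hQmean, hQn2]
      ring
    have hv3 : ∫ p : ℝ × ℝ, 2*(p.1*p.2) ∂(P.prod Q) = 0 := by
      rw [integral_const_mul, hprodmul, hQmean]
      ring
    rw [hv1, hv2, hv3, integral_const, probReal_univ]
    simp only [ENNReal.toReal_one, one_smul]
    ring
  have hintg1 : ∫ p : ℝ × ℝ, Real.log (gaussianPDFReal m τ2 (p.1 + p.2)) ∂(P.prod Q)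
      = (-(1/(2*(τ2:ℝ)))) * (∫ x, x^2 ∂P - m^2 + (σ2:ℝ))
        - Real.log (Real.sqrt (2*π*(τ2:ℝ))) := by
    rw [hfun1, integral_sub (hsq_int.const_mul _) (integrable_const _), integral_const_mul,
      hsqval, integral_const, probReal_univ]
    simp only [ENNReal.toReal_one, one_smul]
  have hintB' : ∫ p, B' p ∂(P.prod Q)
      = d + (-(1:ℝ)/2 - Real.log (Real.sqrt (2*π*(σ2:ℝ))))
        - ((-(1/(2*(τ2:ℝ)))) * (∫ x, x^2 ∂P - m^2 + (σ2:ℝ))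
          - Real.log (Real.sqrt (2*π*(τ2:ℝ)))) := by
    have hsum0 : Integrable (fun p : ℝ × ℝ =>
        llr Q G p.2 + Real.log (gaussianPDFReal 0 σ2 p.2)) (P.prod Q) := hint_llrQ.add hint_g0
    rw [hB', integral_sub hsum0 hint_g1, integral_add hint_llrQ hint_g0]
    rw [integral_comp_snd (measurable_llr Q G).aestronglyMeasurable,
      integral_comp_snd hintg0Q_int.aestronglyMeasurable, hintg0Q, hintg1, ← hd]
  -- the final real bound
  have hlogc : Real.log (Real.sqrt (2*π*(τ2:ℝ))) - Real.log (Real.sqrt (2*π*(σ2:ℝ)))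
      = Real.log (1 + (E:ℝ)/(σ2:ℝ)) / 2 := by
    rw [Real.log_sqrt (by positivity), Real.log_sqrt (by positivity), div_sub_div_same,
      ← Real.log_div (by positivity) (by positivity)]
    congr 2
    rw [hτ2coe]
    field_simp
    ring
  have hSle : ∫ x, x^2 ∂P - m^2 + (σ2:ℝ) ≤ (τ2:ℝ) := by
    rw [hτ2coe]; linarith
  have hIle : ∫ p, B p ∂(P.prod Q) ≤ Real.log (1 + (E:ℝ)/(σ2:ℝ)) / 2 + d := by
    rw [integral_congr_ae hBB', hintB']
    have hhalf : -((-(1/(2*(τ2:ℝ)))) * (∫ x, x^2 ∂P - m^2 + (σ2:ℝ))) ≤ 1/2 := by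
      have h1 : (∫ x, x^2 ∂P - m^2 + (σ2:ℝ)) / (2*(τ2:ℝ)) ≤ (τ2:ℝ) / (2*(τ2:ℝ)) :=
        (div_le_div_iff_of_pos_right (by positivity)).mpr hSle
      have h2 : (τ2:ℝ) / (2*(τ2:ℝ)) = 1/2 := by field_simp
      calc -((-(1/(2*(τ2:ℝ)))) * (∫ x, x^2 ∂P - m^2 + (σ2:ℝ)))
          = (∫ x, x^2 ∂P - m^2 + (σ2:ℝ)) / (2*(τ2:ℝ)) := by ring
        _ ≤ 1/2 := by rw [← h2]; exact h1
    linarith [hlogc, hhalf]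
  -- assemble
  calc rate P Q = klDiv μ (P.prod (μ.map Prod.snd)) := hrate0
    _ ≤ ((∫ z, llr μ (P.prod G') z ∂μ : ℝ) : EReal) :=
        klDiv_le_integral_llr_prod P G' μ hacA hllrμint
    _ ≤ ((Real.log (1 + (E : ℝ) / (σ2 : ℝ)) / 2 + d : ℝ) : EReal) := by
        apply EReal.coe_le_coe_iff.mpr
        rw [hintCB]
        exact hIle

end Stmt9Main

/-- The capacity of the additive-noise channel with zero-mean noise of
variance `σ2`, density and finite differential entropy, under input variance constraint
`E`, exceeds the Gaussian-equivalent capacity by at most the non-Gaussianity of the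
noise: `C ≤ ½ log (1 + E/σ²) + D(P_N ‖ P_{N_G})`. -/
theorem stmt_9 (E σ2 : ℝ≥0) (hE : 0 < E) (hσ2 : 0 < σ2)
    (Q : Measure ℝ) [IsProbabilityMeasure Q] (hQac : Q ≪ volume)
    (hQint : Integrable (fun x => x) Q) (hQmean : ∫ x, x ∂Q = 0)
    (hQL2 : MemLp (fun x => x) 2 Q) (hQvar : variance (fun x => x) Q = (σ2 : ℝ))
    (hQent : HasFiniteDiffEntropy Q) :
    sSup {r : EReal | ∃ P : Measure ℝ, IsProbabilityMeasure P ∧ P ≪ volume ∧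
          MemLp (fun x => x) 2 P ∧ variance (fun x => x) P ≤ (E : ℝ) ∧
          r = rate P Q}
      ≤ ((Real.log (1 + (E : ℝ) / (σ2 : ℝ)) / 2 : ℝ) : EReal)
        + klDiv Q (gaussianReal 0 σ2) := by
  set G : Measure ℝ := gaussianReal 0 σ2 with hG
  by_cases hcond : Q ≪ G ∧ Integrable (fun x => Real.log (Q.rnDeriv G x).toReal) Q
  · have hkl : klDiv Q G = ((∫ x, Real.log (Q.rnDeriv G x).toReal ∂Q : ℝ) : EReal) := by
      unfold klDiv
      rw [if_pos hcond]
    apply sSup_le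
    rintro r ⟨P, hPprob, hPac, hP2, hPvar, rfl⟩
    haveI := hPprob
    have h := Stmt9Main.rate_le E σ2 hσ2 Q hQac hQint hQmean hQL2 hQvar hcond.1 hcond.2
      P hP2 hPvar
    rw [hkl, ← EReal.coe_add]
    exact h
  · have hkl : klDiv Q G = ⊤ := by
      unfold klDiv
      rw [if_neg hcond]
    rw [hkl, EReal.add_top_of_ne_bot (by simp)]
    exact le_top
end
end
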